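/- arXiv:2412.03120 — 2 statements merged into one kernel-verified Lean document; each statement's English description precedes it below -/
import Mathlib

section
/- Strong duality for regularized sequentially composed optimal transport: the infimum, over all feasible tuples (P^(i))_{i=1}^M, of Σ_{i=1}^M (⟨C^(i), P^(i)⟩ − ε·H(P^(i))) equals the supremum, over all tuples (f^(i))_{i=1}^{M+1} with f^(i) ∈ ℝ^{m_i}, of the dual function L((f^(i))_{i=1}^{M+1}). -/
open Matrix Finset Real

noncomputable section

/- Throughout, the number of composed transport plans is `M = N + 2` for `N : ℕ`, which
exactly captures the assumption `M ≥ 2`.  Vectors are indexed by `1, …, M + 1 = N + 3`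
and matrices by `1, …, M = N + 2`. -/

/-- Componentwise (Frobenius) inner product `⟨X, Y⟩ = Σ_{j,k} X_{jk} Y_{jk}`. -/
def frob {m n : ℕ} (X Y : Matrix (Fin m) (Fin n) ℝ) : ℝ := ∑ j, ∑ k, X j k * Y j k

/-- The entropy `H(P) = −Σ_{j,k} P_{jk} (log P_{jk} − 1)` (with `0·log 0 = 0`,
as is the case for `Real.log`). -/
def ent {m n : ℕ} (P : Matrix (Fin m) (Fin n) ℝ) : ℝ :=
  -∑ j, ∑ k, P j k * (Real.log (P j k) - 1)

/-- Feasibility of a tuple of transportation plans for the sequentially composed OT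
problem with `M = N + 2`: the first marginal is `a`, the last is `b`, and consecutive
plans are consistent on the boundaries. -/
def FeasibleT (N : ℕ) (m : ℕ → ℕ)
    (a : Fin (m 1) → ℝ) (b : Fin (m (N+3)) → ℝ)
    (P : ∀ i : ℕ, Matrix (Fin (m i)) (Fin (m (i+1))) ℝ) : Prop :=
  (P 1 *ᵥ fun _ => 1) = a ∧ ((P (N+2))ᵀ *ᵥ fun _ => 1) = b ∧
    ∀ i : ℕ, 1 ≤ i → i ≤ N + 1 → ((P i)ᵀ *ᵥ fun _ => 1) = (P (i+1) *ᵥ fun _ => 1)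

/-- Entrywise nonnegativity of a tuple of matrices, for the relevant indices `1, …, N+2`. -/
def NonnegT (N : ℕ) (m : ℕ → ℕ)
    (P : ∀ i : ℕ, Matrix (Fin (m i)) (Fin (m (i+1))) ℝ) : Prop :=
  ∀ i : ℕ, 1 ≤ i → i ≤ N + 2 → ∀ j k, 0 ≤ P i j k

/-- The regularized primal objective `Σ_{i=1}^{M} (⟨C⁽ⁱ⁾, P⁽ⁱ⁾⟩ − ε H(P⁽ⁱ⁾))`. -/
def primalVal (N : ℕ) (m : ℕ → ℕ)
    (C : ∀ i : ℕ, Matrix (Fin (m i)) (Fin (m (i+1))) ℝ) (ε : ℝ)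
    (P : ∀ i : ℕ, Matrix (Fin (m i)) (Fin (m (i+1))) ℝ) : ℝ :=
  ∑ i ∈ Finset.Icc 1 (N+2), (frob (C i) (P i) - ε * ent (P i))

/-- The dual function `L((f⁽ⁱ⁾)_{i=1}^{M+1})` of the regularized sequentially composed OT
problem with `M = N + 2`. -/
def dualGen (N : ℕ) (m : ℕ → ℕ)
    (C : ∀ i : ℕ, Matrix (Fin (m i)) (Fin (m (i+1))) ℝ)
    (a : Fin (m 1) → ℝ) (b : Fin (m (N+3)) → ℝ) (ε : ℝ)
    (f : ∀ i : ℕ, Fin (m i) → ℝ) : ℝ :=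
  (∑ j, f 1 j * a j) + (∑ k, f (N+3) k * b k)
    - ε * ((∑ j, ∑ k, Real.exp ((f (N+2) j + f (N+3) k - C (N+2) j k) / ε))
      + ∑ i ∈ Finset.Icc 1 (N+1), ∑ j, ∑ k, Real.exp ((f i j - f (i+1) k - C i j k) / ε))

namespace SeqOTAux

variable {N : ℕ} {m : ℕ → ℕ}

lemma feas_row1 {a : Fin (m 1) → ℝ} {b : Fin (m (N+3)) → ℝ}
    {P : ∀ i : ℕ, Matrix (Fin (m i)) (Fin (m (i+1))) ℝ}
    (h : FeasibleT N m a b P) (j : Fin (m 1)) : ∑ k, P 1 j k = a j := by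
  have := congrFun h.1 j
  simpa [Matrix.mulVec, dotProduct] using this

lemma feas_colM {a : Fin (m 1) → ℝ} {b : Fin (m (N+3)) → ℝ}
    {P : ∀ i : ℕ, Matrix (Fin (m i)) (Fin (m (i+1))) ℝ}
    (h : FeasibleT N m a b P) (k : Fin (m (N+3))) : ∑ j, P (N+2) j k = b k := by
  have := congrFun h.2.1 k
  simpa [Matrix.mulVec, dotProduct, Matrix.transpose] using this

lemma feas_mid {a : Fin (m 1) → ℝ} {b : Fin (m (N+3)) → ℝ}
    {P : ∀ i : ℕ, Matrix (Fin (m i)) (Fin (m (i+1))) ℝ}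
    (h : FeasibleT N m a b P) (i : ℕ) (h1 : 1 ≤ i) (h2 : i ≤ N+1) (k : Fin (m (i+1))) :
    ∑ j, P i j k = ∑ l, P (i+1) k l := by
  have := congrFun (h.2.2 i h1 h2) k
  simpa [Matrix.mulVec, dotProduct, Matrix.transpose] using this

lemma young {ε : ℝ} (hε : 0 < ε) {p : ℝ} (hp : 0 ≤ p) (t : ℝ) :
    p * t - ε * Real.exp (t / ε) ≤ ε * (p * (Real.log p - 1)) := by
  rcases hp.eq_or_lt with h | h
  · have := Real.exp_pos (t / ε)
    rw [← h]
    nlinarith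
  · have h1 : t/ε - Real.log p + 1 ≤ Real.exp (t/ε - Real.log p) :=
      Real.add_one_le_exp _
    have h2 : Real.exp (t/ε - Real.log p) = Real.exp (t/ε) / p := by
      rw [Real.exp_sub, Real.exp_log h]
    rw [h2] at h1
    have h3 : p * (t/ε - Real.log p + 1) ≤ Real.exp (t/ε) := by
      have := mul_le_mul_of_nonneg_left h1 h.le
      rwa [mul_div_cancel₀ _ h.ne'] at this
    have h4 : ε * (p * (t/ε - Real.log p + 1)) ≤ ε * Real.exp (t/ε) :=
      mul_le_mul_of_nonneg_left h3 hε.le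
    have h5 : ε * (p * (t/ε - Real.log p + 1)) = p * t - ε * (p * (Real.log p - 1)) := by
      field_simp
      ring
    linarith

/-- The telescoping identity. -/
lemma telescope {a : Fin (m 1) → ℝ} {b : Fin (m (N+3)) → ℝ}
    {P : ∀ i : ℕ, Matrix (Fin (m i)) (Fin (m (i+1))) ℝ}
    (hP : FeasibleT N m a b P) (f : ∀ i : ℕ, Fin (m i) → ℝ) :
    (∑ i ∈ Finset.Icc 1 (N+1), ∑ j, ∑ k, P i j k * (f i j - f (i+1) k))
      + ∑ j, ∑ k, P (N+2) j k * (f (N+2) j + f (N+3) k)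
    = (∑ j, f 1 j * a j) + ∑ k, f (N+3) k * b k := by
  set u : ℕ → ℝ := fun i => ∑ j, f i j * ∑ k, P i j k with hu
  have key : ∀ i ∈ Finset.Icc 1 (N+1),
      (∑ j, ∑ k, P i j k * (f i j - f (i+1) k)) = u i - u (i+1) := by
    intro i hi
    rw [Finset.mem_Icc] at hi
    have expand : (∑ j, ∑ k, P i j k * (f i j - f (i+1) k))
        = (∑ j, f i j * ∑ k, P i j k) - (∑ k, f (i+1) k * ∑ j, P i j k) := by
      simp only [mul_sub, Finset.sum_sub_distrib]
      congr 1
      · refine Finset.sum_congr rfl fun j _ => ?_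
        rw [← Finset.sum_mul, mul_comm]
      · rw [Finset.sum_comm]
        refine Finset.sum_congr rfl fun k _ => ?_
        rw [← Finset.sum_mul, mul_comm]
    rw [expand]
    have : (∑ k, f (i+1) k * ∑ j, P i j k) = u (i+1) := by
      refine Finset.sum_congr rfl fun k _ => ?_
      rw [feas_mid hP i hi.1 hi.2 k]
    rw [this]
  rw [Finset.sum_congr rfl key]
  have tel : ∀ n : ℕ, ∑ i ∈ Finset.Icc 1 (n+1), (u i - u (i+1)) = u 1 - u (n+2) := by
    intro n
    induction n with
    | zero => simp
    | succ n ih =>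
      rw [Finset.sum_Icc_succ_top (by omega : 1 ≤ n+1+1), ih]
      ring_nf
  rw [tel N]
  have last : (∑ j, ∑ k, P (N+2) j k * (f (N+2) j + f (N+3) k))
      = u (N+2) + ∑ k, f (N+3) k * b k := by
    simp only [mul_add, Finset.sum_add_distrib]
    congr 1
    · refine Finset.sum_congr rfl fun j _ => ?_
      rw [← Finset.sum_mul, mul_comm]
    · rw [Finset.sum_comm]
      refine Finset.sum_congr rfl fun k _ => ?_
      rw [← Finset.sum_mul, mul_comm, feas_colM hP k]
  rw [last]
  have hu1 : u 1 = ∑ j, f 1 j * a j := by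
    refine Finset.sum_congr rfl fun j _ => ?_
    rw [feas_row1 hP j]
  rw [hu1]
  ring

/-- Total mass of each plan is 1. -/
lemma mass {a : Fin (m 1) → ℝ} {b : Fin (m (N+3)) → ℝ}
    {P : ∀ i : ℕ, Matrix (Fin (m i)) (Fin (m (i+1))) ℝ}
    (hP : FeasibleT N m a b P) (hasum : ∑ j, a j = 1) :
    ∀ i, 1 ≤ i → i ≤ N+2 → ∑ j, ∑ k, P i j k = 1 := by
  intro i h1 h2
  induction i, h1 using Nat.le_induction with
  | base =>
    rw [Finset.sum_congr rfl fun j _ => feas_row1 hP j]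
    exact hasum
  | succ n hn ih =>
    have hn2 : n ≤ N + 1 := by omega
    have : ∀ k, ∑ l, P (n+1) k l = ∑ j, P n j k := fun k => (feas_mid hP n hn hn2 k).symm
    rw [Finset.sum_congr rfl fun k _ => this k, Finset.sum_comm]
    exact ih (by omega)

/-- Entrywise form of the primal objective. -/
lemma primal_entry (C : ∀ i : ℕ, Matrix (Fin (m i)) (Fin (m (i+1))) ℝ) (ε : ℝ)
    (P : ∀ i : ℕ, Matrix (Fin (m i)) (Fin (m (i+1))) ℝ) :
    primalVal N m C ε P = ∑ i ∈ Finset.Icc 1 (N+2), ∑ j, ∑ k,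
      (C i j k * P i j k + ε * (P i j k * (Real.log (P i j k) - 1))) := by
  unfold primalVal frob ent
  refine Finset.sum_congr rfl fun i _ => ?_
  rw [mul_neg, sub_neg_eq_add, Finset.mul_sum, ← Finset.sum_add_distrib]
  refine Finset.sum_congr rfl fun j _ => ?_
  rw [Finset.mul_sum, ← Finset.sum_add_distrib]

/-- Weak duality. -/
lemma weak_duality {a : Fin (m 1) → ℝ} {b : Fin (m (N+3)) → ℝ}
    {C : ∀ i : ℕ, Matrix (Fin (m i)) (Fin (m (i+1))) ℝ} {ε : ℝ} (hε : 0 < ε)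
    {P : ∀ i : ℕ, Matrix (Fin (m i)) (Fin (m (i+1))) ℝ}
    (hPn : NonnegT N m P) (hPf : FeasibleT N m a b P)
    (f : ∀ i : ℕ, Fin (m i) → ℝ) :
    dualGen N m C a b ε f ≤ primalVal N m C ε P := by
  have tel := telescope hPf f
  rw [primal_entry, Finset.sum_Icc_succ_top (by omega : 1 ≤ N+2)]
  unfold dualGen
  rw [← tel]
  have key : ∀ i ∈ Finset.Icc 1 (N+1),
      (∑ j, ∑ k, P i j k * (f i j - f (i+1) k))
        - ε * (∑ j, ∑ k, Real.exp ((f i j - f (i+1) k - C i j k)/ε))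
      ≤ ∑ j, ∑ k, (C i j k * P i j k + ε * (P i j k * (Real.log (P i j k) - 1))) := by
    intro i hi
    rw [Finset.mem_Icc] at hi
    rw [Finset.mul_sum, ← Finset.sum_sub_distrib]
    refine Finset.sum_le_sum fun j _ => ?_
    rw [Finset.mul_sum, ← Finset.sum_sub_distrib]
    refine Finset.sum_le_sum fun k _ => ?_
    have hy := young hε (hPn i hi.1 (by omega) j k) (f i j - f (i+1) k - C i j k)
    have hr : P i j k * (f i j - f (i+1) k - C i j k)
        = P i j k * (f i j - f (i+1) k) - C i j k * P i j k := by ring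
    linarith
  have keyl :
      (∑ j, ∑ k, P (N+2) j k * (f (N+2) j + f (N+3) k))
        - ε * (∑ j, ∑ k, Real.exp ((f (N+2) j + f (N+3) k - C (N+2) j k)/ε))
      ≤ ∑ j, ∑ k, (C (N+2) j k * P (N+2) j k
          + ε * (P (N+2) j k * (Real.log (P (N+2) j k) - 1))) := by
    rw [Finset.mul_sum, ← Finset.sum_sub_distrib]
    refine Finset.sum_le_sum fun j _ => ?_
    rw [Finset.mul_sum, ← Finset.sum_sub_distrib]
    refine Finset.sum_le_sum fun k _ => ?_
    have hy := young hε (hPn (N+2) (by omega) (by omega) j k)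
      (f (N+2) j + f (N+3) k - C (N+2) j k)
    have hr : P (N+2) j k * (f (N+2) j + f (N+3) k - C (N+2) j k)
        = P (N+2) j k * (f (N+2) j + f (N+3) k) - C (N+2) j k * P (N+2) j k := by ring
    linarith
  have h1 := Finset.sum_le_sum key
  rw [Finset.sum_sub_distrib] at h1
  rw [← Finset.mul_sum] at h1
  linarith

/-- Sum formulation of feasibility. -/
lemma feasibleT_iff {a : Fin (m 1) → ℝ} {b : Fin (m (N+3)) → ℝ}
    {P : ∀ i : ℕ, Matrix (Fin (m i)) (Fin (m (i+1))) ℝ} :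
    FeasibleT N m a b P ↔ ((∀ j, ∑ k, P 1 j k = a j) ∧ (∀ k, ∑ j, P (N+2) j k = b k) ∧
      (∀ i, 1 ≤ i → i ≤ N+1 → ∀ k, ∑ j, P i j k = ∑ l, P (i+1) k l)) := by
  constructor
  · intro h
    exact ⟨feas_row1 h, feas_colM h, fun i h1 h2 k => feas_mid h i h1 h2 k⟩
  · rintro ⟨h1, h2, h3⟩
    refine ⟨funext fun j => ?_, funext fun k => ?_, fun i hi1 hi2 => funext fun k => ?_⟩
    · simpa [Matrix.mulVec, dotProduct] using h1 j
    · simpa [Matrix.mulVec, dotProduct, Matrix.transpose] using h2 k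
    · simpa [Matrix.mulVec, dotProduct, Matrix.transpose] using h3 i hi1 hi2 k

variable (N m) in
/-- Reference marginals: `a` at `1`, `b` at `N+3`, uniform in between. -/
def wvec (a : Fin (m 1) → ℝ) (b : Fin (m (N+3)) → ℝ) : ∀ i : ℕ, Fin (m i) → ℝ := fun i =>
  if h : i = 1 then fun j => a (Fin.cast (congrArg m h) j)
  else if h' : i = N+3 then fun j => b (Fin.cast (congrArg m h') j)
  else fun _ => 1 / (m i : ℝ)

section Wvec

variable {a : Fin (m 1) → ℝ} {b : Fin (m (N+3)) → ℝ}

lemma wvec_one : wvec N m a b 1 = a := by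
  unfold wvec
  rw [dif_pos rfl]
  rfl

lemma wvec_last : wvec N m a b (N+3) = b := by
  unfold wvec
  rw [dif_neg (by omega), dif_pos rfl]
  rfl

lemma wvec_mid {i : ℕ} (h1 : i ≠ 1) (h2 : i ≠ N+3) :
    wvec N m a b i = fun _ => 1 / (m i : ℝ) := by
  unfold wvec
  rw [dif_neg h1, dif_neg h2]

lemma wvec_nonneg (ha : ∀ j, 0 ≤ a j) (hb : ∀ k, 0 ≤ b k) (i : ℕ) (j : Fin (m i)) :
    0 ≤ wvec N m a b i j := by
  unfold wvec
  split_ifs with h1 h2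
  · exact ha _
  · exact hb _
  · positivity

lemma wvec_le_one (ha : ∀ j, 0 ≤ a j) (hb : ∀ k, 0 ≤ b k)
    (hasum : ∑ j, a j = 1) (hbsum : ∑ k, b k = 1) (hm : ∀ i, 0 < m i)
    (i : ℕ) (j : Fin (m i)) : wvec N m a b i j ≤ 1 := by
  unfold wvec
  split_ifs with h1 h2
  · calc a _ ≤ ∑ j', a j' := Finset.single_le_sum (fun j' _ => ha j') (Finset.mem_univ _)
    _ = 1 := hasum
  · calc b _ ≤ ∑ k', b k' := Finset.single_le_sum (fun k' _ => hb k') (Finset.mem_univ _)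
    _ = 1 := hbsum
  · rw [div_le_one (by exact_mod_cast hm i)]
    exact_mod_cast hm i

lemma wvec_sum (hasum : ∑ j, a j = 1) (hbsum : ∑ k, b k = 1) (hm : ∀ i, 0 < m i)
    (i : ℕ) : ∑ j, wvec N m a b i j = 1 := by
  unfold wvec
  split_ifs with h1 h2
  · subst h1; simpa using hasum
  · subst h2; simpa using hbsum
  · rw [Finset.sum_const, Finset.card_univ, Fintype.card_fin, nsmul_eq_mul, mul_one_div,
      div_self (by exact_mod_cast (hm i).ne' : (m i : ℝ) ≠ 0)]

end Wvec

variable (N m) in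
/-- The product-chain reference plan, trimmed outside `[1, N+2]`. -/
def P0 (a : Fin (m 1) → ℝ) (b : Fin (m (N+3)) → ℝ) :
    ∀ i : ℕ, Matrix (Fin (m i)) (Fin (m (i+1))) ℝ := fun i =>
  if 1 ≤ i ∧ i ≤ N+2 then Matrix.of (fun j k => wvec N m a b i j * wvec N m a b (i+1) k) else 0

section P0sec

variable {a : Fin (m 1) → ℝ} {b : Fin (m (N+3)) → ℝ}

lemma P0_apply {i : ℕ} (h1 : 1 ≤ i) (h2 : i ≤ N+2) (j : Fin (m i)) (k : Fin (m (i+1))) :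
    P0 N m a b i j k = wvec N m a b i j * wvec N m a b (i+1) k := by
  unfold P0
  rw [if_pos ⟨h1, h2⟩]
  rfl

lemma P0_trim {i : ℕ} (h : i ∉ Finset.Icc 1 (N+2)) : P0 N m a b i = 0 := by
  rw [Finset.mem_Icc] at h
  unfold P0
  rw [if_neg (by omega)]

lemma P0_nonneg (ha : ∀ j, 0 ≤ a j) (hb : ∀ k, 0 ≤ b k) : NonnegT N m (P0 N m a b) := by
  intro i h1 h2 j k
  rw [P0_apply h1 h2]
  exact mul_nonneg (wvec_nonneg ha hb i j) (wvec_nonneg ha hb (i+1) k)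

lemma P0_feasible (ha : ∀ j, 0 ≤ a j) (hb : ∀ k, 0 ≤ b k)
    (hasum : ∑ j, a j = 1) (hbsum : ∑ k, b k = 1) (hm : ∀ i, 0 < m i) :
    FeasibleT N m a b (P0 N m a b) := by
  rw [feasibleT_iff]
  refine ⟨fun j => ?_, fun k => ?_, fun i h1 h2 k => ?_⟩
  · rw [Finset.sum_congr rfl fun k _ => P0_apply (by omega) (by omega) j k,
      ← Finset.mul_sum, wvec_sum hasum hbsum hm, mul_one, wvec_one]
  · rw [Finset.sum_congr rfl fun j _ => P0_apply (by omega) (by omega) j k,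
      ← Finset.sum_mul, wvec_sum hasum hbsum hm, one_mul]
    exact congrFun wvec_last k
  · rw [Finset.sum_congr rfl fun j _ => P0_apply (by omega) (by omega) j k,
      Finset.sum_congr rfl fun l _ => P0_apply (by omega) (by omega) k l,
      ← Finset.sum_mul, ← Finset.mul_sum, wvec_sum hasum hbsum hm,
      wvec_sum hasum hbsum hm, one_mul, mul_one]

lemma P0_le_one (ha : ∀ j, 0 ≤ a j) (hb : ∀ k, 0 ≤ b k)
    (hasum : ∑ j, a j = 1) (hbsum : ∑ k, b k = 1) (hm : ∀ i, 0 < m i)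
    {i : ℕ} (h1 : 1 ≤ i) (h2 : i ≤ N+2) (j : Fin (m i)) (k : Fin (m (i+1))) :
    P0 N m a b i j k ≤ 1 := by
  rw [P0_apply h1 h2]
  exact mul_le_one₀ (wvec_le_one ha hb hasum hbsum hm i j)
    (wvec_nonneg ha hb (i+1) k) (wvec_le_one ha hb hasum hbsum hm (i+1) k)

end P0sec

variable (N m) in
/-- The compact search domain. -/
def GoodSet (a : Fin (m 1) → ℝ) (b : Fin (m (N+3)) → ℝ) :
    Set (∀ i : ℕ, Matrix (Fin (m i)) (Fin (m (i+1))) ℝ) :=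
  {P | NonnegT N m P ∧ FeasibleT N m a b P ∧ (∀ i, i ∉ Finset.Icc 1 (N+2) → P i = 0) ∧
    ∀ i j k, P i j k ≤ 2}

lemma continuous_eval (i : ℕ) (j : Fin (m i)) (k : Fin (m (i+1))) :
    Continuous (fun P : ∀ i : ℕ, Matrix (Fin (m i)) (Fin (m (i+1))) ℝ => P i j k) :=
  ((continuous_apply k).comp
    ((continuous_apply j).comp (continuous_apply i) :
      Continuous fun P : ∀ i : ℕ, Matrix (Fin (m i)) (Fin (m (i+1))) ℝ => P i j) :
    Continuous fun P : ∀ i : ℕ, Matrix (Fin (m i)) (Fin (m (i+1))) ℝ => P i j k)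

lemma continuous_primalVal (C : ∀ i : ℕ, Matrix (Fin (m i)) (Fin (m (i+1))) ℝ) (ε : ℝ) :
    Continuous (fun P : ∀ i : ℕ, Matrix (Fin (m i)) (Fin (m (i+1))) ℝ => primalVal N m C ε P) := by
  have key : (fun P : ∀ i : ℕ, Matrix (Fin (m i)) (Fin (m (i+1))) ℝ => primalVal N m C ε P)
      = fun P => ∑ i ∈ Finset.Icc 1 (N+2), ∑ j, ∑ k,
        (C i j k * P i j k + ε * (P i j k * Real.log (P i j k) - P i j k)) := by
    funext P
    rw [primal_entry]
    refine Finset.sum_congr rfl fun i _ => Finset.sum_congr rfl fun j _ =>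
      Finset.sum_congr rfl fun k _ => ?_
    ring
  rw [key]
  refine continuous_finset_sum _ fun i _ => continuous_finset_sum _ fun j _ =>
    continuous_finset_sum _ fun k _ => ?_
  exact (continuous_const.mul (continuous_eval i j k)).add
    (continuous_const.mul ((Real.continuous_mul_log.comp (continuous_eval i j k)).sub
      (continuous_eval i j k)))

lemma goodSet_compact {a : Fin (m 1) → ℝ} {b : Fin (m (N+3)) → ℝ} :
    IsCompact (GoodSet N m a b) := by
  have hK : IsCompact {P : ∀ i : ℕ, Matrix (Fin (m i)) (Fin (m (i+1))) ℝ |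
      ∀ i j k, P i j k ∈ Set.Icc (0:ℝ) 2} := by
    have : {P : ∀ i : ℕ, Matrix (Fin (m i)) (Fin (m (i+1))) ℝ | ∀ i j k, P i j k ∈ Set.Icc (0:ℝ) 2}
        = Set.univ.pi fun i => Set.univ.pi fun j => Set.univ.pi fun k => Set.Icc (0:ℝ) 2 := by
      ext P; simp only [Set.mem_setOf_eq, Set.mem_univ_pi, Set.mem_Icc]
      exact ⟨fun h i _ j _ k _ => h i j k, fun h i j k => h i trivial j trivial k trivial⟩
    rw [this]
    exact isCompact_univ_pi fun i => isCompact_univ_pi fun j =>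
      isCompact_univ_pi fun k => isCompact_Icc
  refine IsCompact.of_isClosed_subset hK ?_ ?_
  · -- closedness
    have c1 : IsClosed {P : ∀ i : ℕ, Matrix (Fin (m i)) (Fin (m (i+1))) ℝ | NonnegT N m P} := by
      have : {P : ∀ i : ℕ, Matrix (Fin (m i)) (Fin (m (i+1))) ℝ | NonnegT N m P}
          = ⋂ (i : ℕ), ⋂ (j : Fin (m i)), ⋂ (k : Fin (m (i+1))),
            {P : ∀ i : ℕ, Matrix (Fin (m i)) (Fin (m (i+1))) ℝ | 1 ≤ i → i ≤ N+2 → 0 ≤ P i j k} := by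
        ext P
        simp only [Set.mem_setOf_eq, Set.mem_iInter, NonnegT]
        tauto
      rw [this]
      refine isClosed_iInter fun i => isClosed_iInter fun j => isClosed_iInter fun k => ?_
      by_cases h : 1 ≤ i ∧ i ≤ N+2
      · have : {P : ∀ i : ℕ, Matrix (Fin (m i)) (Fin (m (i+1))) ℝ | 1 ≤ i → i ≤ N+2 → 0 ≤ P i j k}
            = {P : ∀ i : ℕ, Matrix (Fin (m i)) (Fin (m (i+1))) ℝ | 0 ≤ P i j k} := by
          ext P; simp [h.1, h.2]
        rw [this]
        exact isClosed_le continuous_const (continuous_eval i j k)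
      · have : {P : ∀ i : ℕ, Matrix (Fin (m i)) (Fin (m (i+1))) ℝ | 1 ≤ i → i ≤ N+2 → 0 ≤ P i j k}
            = Set.univ := by
          ext P; simp only [Set.mem_setOf_eq, Set.mem_univ, iff_true]
          intro h1 h2; exact absurd ⟨h1, h2⟩ h
        rw [this]; exact isClosed_univ
    have c2 : IsClosed {P : ∀ i : ℕ, Matrix (Fin (m i)) (Fin (m (i+1))) ℝ | FeasibleT N m a b P} := by
      have : {P : ∀ i : ℕ, Matrix (Fin (m i)) (Fin (m (i+1))) ℝ | FeasibleT N m a b P}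
          = (⋂ (j : Fin (m 1)), {P : ∀ i : ℕ, Matrix (Fin (m i)) (Fin (m (i+1))) ℝ | ∑ k, P 1 j k = a j})
            ∩ ((⋂ (k : Fin (m (N+3))), {P : ∀ i : ℕ, Matrix (Fin (m i)) (Fin (m (i+1))) ℝ | ∑ j, P (N+2) j k = b k})
            ∩ (⋂ (i : ℕ), ⋂ (k : Fin (m (i+1))), {P : ∀ i : ℕ, Matrix (Fin (m i)) (Fin (m (i+1))) ℝ |
                1 ≤ i → i ≤ N+1 → ∑ j, P i j k = ∑ l, P (i+1) k l})) := by
        ext P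
        simp only [Set.mem_setOf_eq, Set.mem_inter_iff, Set.mem_iInter, feasibleT_iff]
        tauto
      rw [this]
      refine IsClosed.inter (isClosed_iInter fun j => ?_) (IsClosed.inter
        (isClosed_iInter fun k => ?_) (isClosed_iInter fun i => isClosed_iInter fun k => ?_))
      · exact isClosed_eq (continuous_finset_sum _ fun k _ => continuous_eval 1 j k) continuous_const
      · exact isClosed_eq (continuous_finset_sum _ fun j _ => continuous_eval (N+2) j k) continuous_const
      · by_cases h : 1 ≤ i ∧ i ≤ N+1
        · have : {P : ∀ i : ℕ, Matrix (Fin (m i)) (Fin (m (i+1))) ℝ |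
              1 ≤ i → i ≤ N+1 → ∑ j, P i j k = ∑ l, P (i+1) k l}
              = {P : ∀ i : ℕ, Matrix (Fin (m i)) (Fin (m (i+1))) ℝ | ∑ j, P i j k = ∑ l, P (i+1) k l} := by
            ext P; simp [h.1, h.2]
          rw [this]
          exact isClosed_eq (continuous_finset_sum _ fun j _ => continuous_eval i j k)
            (continuous_finset_sum _ fun l _ => continuous_eval (i+1) k l)
        · have : {P : ∀ i : ℕ, Matrix (Fin (m i)) (Fin (m (i+1))) ℝ |
              1 ≤ i → i ≤ N+1 → ∑ j, P i j k = ∑ l, P (i+1) k l} = Set.univ := by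
            ext P; simp only [Set.mem_setOf_eq, Set.mem_univ, iff_true]
            intro h1 h2; exact absurd ⟨h1, h2⟩ h
          rw [this]; exact isClosed_univ
    have c3 : IsClosed {P : ∀ i : ℕ, Matrix (Fin (m i)) (Fin (m (i+1))) ℝ |
        ∀ i, i ∉ Finset.Icc 1 (N+2) → P i = 0} := by
      have : {P : ∀ i : ℕ, Matrix (Fin (m i)) (Fin (m (i+1))) ℝ | ∀ i, i ∉ Finset.Icc 1 (N+2) → P i = 0}
          = ⋂ (i : ℕ), {P : ∀ i : ℕ, Matrix (Fin (m i)) (Fin (m (i+1))) ℝ |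
              i ∉ Finset.Icc 1 (N+2) → P i = 0} := by
        ext P; simp only [Set.mem_setOf_eq, Set.mem_iInter]
      rw [this]
      refine isClosed_iInter fun i => ?_
      by_cases h : i ∈ Finset.Icc 1 (N+2)
      · have : {P : ∀ i : ℕ, Matrix (Fin (m i)) (Fin (m (i+1))) ℝ | i ∉ Finset.Icc 1 (N+2) → P i = 0}
            = Set.univ := by
          ext P; simp [h]
        rw [this]; exact isClosed_univ
      · have : {P : ∀ i : ℕ, Matrix (Fin (m i)) (Fin (m (i+1))) ℝ | i ∉ Finset.Icc 1 (N+2) → P i = 0}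
            = {P : ∀ i : ℕ, Matrix (Fin (m i)) (Fin (m (i+1))) ℝ | P i = 0} := by
          ext P; simp [h]
        rw [this]
        exact isClosed_eq (continuous_apply i) continuous_const
    have c4 : IsClosed {P : ∀ i : ℕ, Matrix (Fin (m i)) (Fin (m (i+1))) ℝ | ∀ i j k, P i j k ≤ 2} := by
      have : {P : ∀ i : ℕ, Matrix (Fin (m i)) (Fin (m (i+1))) ℝ | ∀ i j k, P i j k ≤ 2}
          = ⋂ (i : ℕ), ⋂ (j : Fin (m i)), ⋂ (k : Fin (m (i+1))),
            {P : ∀ i : ℕ, Matrix (Fin (m i)) (Fin (m (i+1))) ℝ | P i j k ≤ 2} := by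
        ext P; simp only [Set.mem_setOf_eq, Set.mem_iInter]
      rw [this]
      exact isClosed_iInter fun i => isClosed_iInter fun j => isClosed_iInter fun k =>
        isClosed_le (continuous_eval i j k) continuous_const
    exact IsClosed.inter c1 (IsClosed.inter c2 (IsClosed.inter c3 c4))
  · intro P hP
    intro i j k
    constructor
    · by_cases h : 1 ≤ i ∧ i ≤ N+2
      · exact hP.1 i h.1 h.2 j k
      · have := hP.2.2.1 i (by rw [Finset.mem_Icc]; omega)
        rw [this]; norm_num
    · exact hP.2.2.2 i j k

lemma entry_le_one {a : Fin (m 1) → ℝ} {b : Fin (m (N+3)) → ℝ}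
    {P : ∀ i : ℕ, Matrix (Fin (m i)) (Fin (m (i+1))) ℝ}
    (hPn : NonnegT N m P) (hPf : FeasibleT N m a b P) (hasum : ∑ j, a j = 1)
    {i : ℕ} (h1 : 1 ≤ i) (h2 : i ≤ N+2) (j : Fin (m i)) (k : Fin (m (i+1))) :
    P i j k ≤ 1 := by
  have hmass := mass hPf hasum i h1 h2
  calc P i j k ≤ ∑ k', P i j k' :=
        Finset.single_le_sum (fun k' _ => hPn i h1 h2 j k') (Finset.mem_univ k)
    _ ≤ ∑ j', ∑ k', P i j' k' :=
        Finset.single_le_sum (fun j' _ => Finset.sum_nonneg fun k' _ => hPn i h1 h2 j' k')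
          (Finset.mem_univ j)
    _ = 1 := hmass

lemma P0_mem_goodSet {a : Fin (m 1) → ℝ} {b : Fin (m (N+3)) → ℝ}
    (ha : ∀ j, 0 ≤ a j) (hb : ∀ k, 0 ≤ b k)
    (hasum : ∑ j, a j = 1) (hbsum : ∑ k, b k = 1) (hm : ∀ i, 0 < m i) :
    P0 N m a b ∈ GoodSet N m a b := by
  refine ⟨P0_nonneg ha hb, P0_feasible ha hb hasum hbsum hm, fun i hi => P0_trim hi, ?_⟩
  intro i j k
  by_cases h : 1 ≤ i ∧ i ≤ N+2
  · linarith [P0_le_one ha hb hasum hbsum hm h.1 h.2 j k]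
  · have : P0 N m a b i = 0 := P0_trim (by rw [Finset.mem_Icc]; omega)
    rw [this]
    norm_num

lemma exists_minimizer {a : Fin (m 1) → ℝ} {b : Fin (m (N+3)) → ℝ}
    (ha : ∀ j, 0 ≤ a j) (hb : ∀ k, 0 ≤ b k)
    (hasum : ∑ j, a j = 1) (hbsum : ∑ k, b k = 1) (hm : ∀ i, 0 < m i)
    (C : ∀ i : ℕ, Matrix (Fin (m i)) (Fin (m (i+1))) ℝ) (ε : ℝ) :
    ∃ Pstar ∈ GoodSet N m a b, ∀ Q ∈ GoodSet N m a b,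
      primalVal N m C ε Pstar ≤ primalVal N m C ε Q := by
  obtain ⟨Pstar, hmem, hmin⟩ := goodSet_compact.exists_isMinOn
    ⟨P0 N m a b, P0_mem_goodSet ha hb hasum hbsum hm⟩
    (continuous_primalVal C ε).continuousOn
  exact ⟨Pstar, hmem, fun Q hQ => hmin hQ⟩

lemma min_global {a : Fin (m 1) → ℝ} {b : Fin (m (N+3)) → ℝ}
    {C : ∀ i : ℕ, Matrix (Fin (m i)) (Fin (m (i+1))) ℝ} {ε : ℝ}
    (hasum : ∑ j, a j = 1)
    {Pstar : ∀ i : ℕ, Matrix (Fin (m i)) (Fin (m (i+1))) ℝ}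
    (hmin : ∀ Q ∈ GoodSet N m a b, primalVal N m C ε Pstar ≤ primalVal N m C ε Q) :
    ∀ P, NonnegT N m P → FeasibleT N m a b P → primalVal N m C ε Pstar ≤ primalVal N m C ε P := by
  intro P hPn hPf
  set P' : ∀ i : ℕ, Matrix (Fin (m i)) (Fin (m (i+1))) ℝ :=
    fun i => if 1 ≤ i ∧ i ≤ N+2 then P i else 0 with hP'
  have hfeq : ∀ i, 1 ≤ i → i ≤ N+2 → P' i = P i := fun i h1 h2 => if_pos ⟨h1, h2⟩
  have hPf' : FeasibleT N m a b P' := by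
    rw [feasibleT_iff]
    rw [feasibleT_iff] at hPf
    refine ⟨fun j => ?_, fun k => ?_, fun i h1 h2 k => ?_⟩
    · rw [hfeq 1 (by omega) (by omega)]; exact hPf.1 j
    · rw [hfeq (N+2) (by omega) (by omega)]; exact hPf.2.1 k
    · rw [hfeq i h1 (by omega), hfeq (i+1) (by omega) (by omega)]; exact hPf.2.2 i h1 h2 k
  have hPn' : NonnegT N m P' := by
    intro i h1 h2 j k
    rw [hfeq i h1 h2]
    exact hPn i h1 h2 j k
  have hmem : P' ∈ GoodSet N m a b := by
    refine ⟨hPn', hPf', fun i hi => ?_, fun i j k => ?_⟩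
    · rw [Finset.mem_Icc] at hi
      exact if_neg (by omega)
    · by_cases h : 1 ≤ i ∧ i ≤ N+2
      · rw [hfeq i h.1 h.2]
        linarith [entry_le_one hPn hPf hasum h.1 h.2 j k]
      · have : P' i = 0 := if_neg h
        rw [this]
        norm_num
  have hval : primalVal N m C ε P' = primalVal N m C ε P := by
    rw [primal_entry, primal_entry]
    refine Finset.sum_congr rfl fun i hi => ?_
    rw [Finset.mem_Icc] at hi
    rw [hfeq i hi.1 hi.2]
  calc primalVal N m C ε Pstar ≤ primalVal N m C ε P' := hmin P' hmem
    _ = primalVal N m C ε P := hval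

lemma sum_le_mem {ι : Type*} {s : Finset ι} {g : ι → ℝ} (h : ∀ x ∈ s, g x ≤ 0)
    {x₀ : ι} (hx : x₀ ∈ s) : ∑ x ∈ s, g x ≤ g x₀ := by
  classical
  rw [← Finset.add_sum_erase s g hx]
  have : ∑ x ∈ s.erase x₀, g x ≤ 0 :=
    Finset.sum_nonpos fun x hxx => h x (Finset.mem_of_mem_erase hxx)
  linarith

lemma convex_combo_entropy {t : ℝ} (ht0 : 0 ≤ t) (ht1 : t ≤ 1) :
    ∀ x y : ℝ, 0 ≤ x → 0 ≤ y →
      ((1-t)*x + t*y) * (Real.log ((1-t)*x + t*y) - 1)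
        ≤ (1-t) * (x * (Real.log x - 1)) + t * (y * (Real.log y - 1)) := by
  have hcv : ConvexOn ℝ (Set.Ici 0) (fun x : ℝ => x * Real.log x - x) :=
    Real.convexOn_mul_log.sub (concaveOn_id (convex_Ici 0))
  intro x y hx hy
  have h2 := hcv.2 (Set.mem_Ici.2 hx) (Set.mem_Ici.2 hy)
    (by linarith : (0:ℝ) ≤ 1 - t) ht0 (by ring)
  simp only [smul_eq_mul] at h2
  have e : ∀ w : ℝ, w * (Real.log w - 1) = w * Real.log w - w := fun w => by ring
  rw [e, e, e]
  linarith

/-- Strict positivity of the minimizer wherever the reference plan is positive. -/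
lemma pstar_pos {a : Fin (m 1) → ℝ} {b : Fin (m (N+3)) → ℝ}
    {C : ∀ i : ℕ, Matrix (Fin (m i)) (Fin (m (i+1))) ℝ} {ε : ℝ} (hε : 0 < ε)
    (ha : ∀ j, 0 ≤ a j) (hb : ∀ k, 0 ≤ b k)
    (hasum : ∑ j, a j = 1) (hbsum : ∑ k, b k = 1) (hm : ∀ i, 0 < m i)
    {Pstar : ∀ i : ℕ, Matrix (Fin (m i)) (Fin (m (i+1))) ℝ}
    (hmem : Pstar ∈ GoodSet N m a b)
    (hmin : ∀ Q ∈ GoodSet N m a b, primalVal N m C ε Pstar ≤ primalVal N m C ε Q) :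
    ∀ i, 1 ≤ i → i ≤ N+2 → ∀ j k, 0 < P0 N m a b i j k → 0 < Pstar i j k := by
  intro i₀ hi₁ hi₂ j₀ k₀ hq
  by_contra hzero
  have hp0 : Pstar i₀ j₀ k₀ = 0 :=
    le_antisymm (not_lt.1 hzero) (hmem.1 i₀ hi₁ hi₂ j₀ k₀)
  set q₀ : ℝ := P0 N m a b i₀ j₀ k₀ with hq₀
  -- the mixing family
  set Pt : ℝ → ∀ i : ℕ, Matrix (Fin (m i)) (Fin (m (i+1))) ℝ :=
    fun t i => Matrix.of fun j k => (1-t) * Pstar i j k + t * P0 N m a b i j k with hPt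
  have hPt_apply : ∀ t i j k, Pt t i j k = (1-t) * Pstar i j k + t * P0 N m a b i j k :=
    fun t i j k => rfl
  have hq_mem := P0_mem_goodSet ha hb hasum hbsum hm
  have hmem_t : ∀ t : ℝ, 0 ≤ t → t ≤ 1 → Pt t ∈ GoodSet N m a b := by
    intro t h0 h1
    refine ⟨?_, ?_, ?_, ?_⟩
    · intro i hi1 hi2 j k
      rw [hPt_apply]
      have := hmem.1 i hi1 hi2 j k
      have := hq_mem.1 i hi1 hi2 j k
      nlinarith
    · rw [feasibleT_iff]
      have hf1 := (feasibleT_iff).1 hmem.2.1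
      have hf2 := (feasibleT_iff).1 hq_mem.2.1
      refine ⟨fun j => ?_, fun k => ?_, fun i hi1 hi2 k => ?_⟩
      · simp only [hPt_apply]
        rw [Finset.sum_add_distrib, ← Finset.mul_sum, ← Finset.mul_sum,
          hf1.1 j, hf2.1 j]
        ring
      · simp only [hPt_apply]
        rw [Finset.sum_add_distrib, ← Finset.mul_sum, ← Finset.mul_sum,
          hf1.2.1 k, hf2.2.1 k]
        ring
      · simp only [hPt_apply]
        rw [Finset.sum_add_distrib, ← Finset.mul_sum, ← Finset.mul_sum,
          hf1.2.2 i hi1 hi2 k, hf2.2.2 i hi1 hi2 k,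
          Finset.sum_add_distrib, ← Finset.mul_sum, ← Finset.mul_sum]
    · intro i hi
      have e1 : Pstar i = 0 := hmem.2.2.1 i hi
      have e2 : P0 N m a b i = 0 := P0_trim hi
      funext j k
      rw [hPt_apply, e1, e2]
      simp
    · intro i j k
      rw [hPt_apply]
      have h2 := hmem.2.2.2 i j k
      have h3 := hq_mem.2.2.2 i j k
      nlinarith
  -- value estimate
  have key : ∀ t : ℝ, 0 < t → t < 1 →
      primalVal N m C ε (Pt t) ≤ (1-t) * primalVal N m C ε Pstar
        + t * primalVal N m C ε (P0 N m a b) + ε * (t * q₀ * Real.log t) := by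
    intro t h0 h1
    have hcomb := convex_combo_entropy h0.le h1.le
    -- per-entry difference function
    have per : ∀ i ∈ Finset.Icc 1 (N+2), ∀ (j : Fin (m i)) (k : Fin (m (i+1))),
        (C i j k * Pt t i j k + ε * (Pt t i j k * (Real.log (Pt t i j k) - 1)))
          - ((1-t) * (C i j k * Pstar i j k + ε * (Pstar i j k * (Real.log (Pstar i j k) - 1)))
            + t * (C i j k * P0 N m a b i j k
              + ε * (P0 N m a b i j k * (Real.log (P0 N m a b i j k) - 1)))) ≤ 0 := by
      intro i hi j k
      rw [Finset.mem_Icc] at hi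
      rw [hPt_apply]
      have hx := hmem.1 i hi.1 hi.2 j k
      have hy := hq_mem.1 i hi.1 hi.2 j k
      have := hcomb _ _ hx hy
      nlinarith [this, hε]
    have pere0 :
        (C i₀ j₀ k₀ * Pt t i₀ j₀ k₀ + ε * (Pt t i₀ j₀ k₀ * (Real.log (Pt t i₀ j₀ k₀) - 1)))
          - ((1-t) * (C i₀ j₀ k₀ * Pstar i₀ j₀ k₀
              + ε * (Pstar i₀ j₀ k₀ * (Real.log (Pstar i₀ j₀ k₀) - 1)))
            + t * (C i₀ j₀ k₀ * q₀ + ε * (q₀ * (Real.log q₀ - 1))))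
          = ε * (t * q₀ * Real.log t) := by
      have hlog : Real.log ((1-t) * 0 + t * q₀) = Real.log t + Real.log q₀ := by
        rw [mul_zero, zero_add, Real.log_mul h0.ne' hq.ne']
      rw [hPt_apply, hp0, ← hq₀, hlog]
      simp only [Real.log_zero]
      ring
    -- sum them up
    rw [primal_entry, primal_entry, primal_entry]
    have expand : (1-t) * (∑ i ∈ Finset.Icc 1 (N+2), ∑ j, ∑ k,
          (C i j k * Pstar i j k + ε * (Pstar i j k * (Real.log (Pstar i j k) - 1))))
        + t * (∑ i ∈ Finset.Icc 1 (N+2), ∑ j, ∑ k,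
          (C i j k * P0 N m a b i j k + ε * (P0 N m a b i j k * (Real.log (P0 N m a b i j k) - 1))))
        = ∑ i ∈ Finset.Icc 1 (N+2), ∑ j, ∑ k,
          ((1-t) * (C i j k * Pstar i j k + ε * (Pstar i j k * (Real.log (Pstar i j k) - 1)))
            + t * (C i j k * P0 N m a b i j k
              + ε * (P0 N m a b i j k * (Real.log (P0 N m a b i j k) - 1)))) := by
      rw [Finset.mul_sum, Finset.mul_sum, ← Finset.sum_add_distrib]
      refine Finset.sum_congr rfl fun i _ => ?_
      rw [Finset.mul_sum, Finset.mul_sum, ← Finset.sum_add_distrib]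
      refine Finset.sum_congr rfl fun j _ => ?_
      rw [Finset.mul_sum, Finset.mul_sum, ← Finset.sum_add_distrib]
    rw [expand]
    have final : ∑ i ∈ Finset.Icc 1 (N+2), ∑ j, ∑ k,
        ((C i j k * Pt t i j k + ε * (Pt t i j k * (Real.log (Pt t i j k) - 1)))
          - ((1-t) * (C i j k * Pstar i j k + ε * (Pstar i j k * (Real.log (Pstar i j k) - 1)))
            + t * (C i j k * P0 N m a b i j k
              + ε * (P0 N m a b i j k * (Real.log (P0 N m a b i j k) - 1)))))
        ≤ ε * (t * q₀ * Real.log t) := by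
      calc ∑ i ∈ Finset.Icc 1 (N+2), ∑ j, ∑ k, _
          ≤ ∑ j, ∑ k, ((C i₀ j k * Pt t i₀ j k + ε * (Pt t i₀ j k * (Real.log (Pt t i₀ j k) - 1)))
            - ((1-t) * (C i₀ j k * Pstar i₀ j k + ε * (Pstar i₀ j k * (Real.log (Pstar i₀ j k) - 1)))
              + t * (C i₀ j k * P0 N m a b i₀ j k
                + ε * (P0 N m a b i₀ j k * (Real.log (P0 N m a b i₀ j k) - 1))))) := by
            refine sum_le_mem (fun i hi => ?_) (Finset.mem_Icc.2 ⟨hi₁, hi₂⟩)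
            exact Finset.sum_nonpos fun j _ => Finset.sum_nonpos fun k _ => per i hi j k
        _ ≤ ∑ k, ((C i₀ j₀ k * Pt t i₀ j₀ k + ε * (Pt t i₀ j₀ k * (Real.log (Pt t i₀ j₀ k) - 1)))
            - ((1-t) * (C i₀ j₀ k * Pstar i₀ j₀ k
                + ε * (Pstar i₀ j₀ k * (Real.log (Pstar i₀ j₀ k) - 1)))
              + t * (C i₀ j₀ k * P0 N m a b i₀ j₀ k
                + ε * (P0 N m a b i₀ j₀ k * (Real.log (P0 N m a b i₀ j₀ k) - 1))))) := by
            refine sum_le_mem (fun j _ => ?_) (Finset.mem_univ j₀)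
            exact Finset.sum_nonpos fun k _ => per i₀ (Finset.mem_Icc.2 ⟨hi₁, hi₂⟩) j k
        _ ≤ _ := le_trans (sum_le_mem (fun k _ => per i₀ (Finset.mem_Icc.2 ⟨hi₁, hi₂⟩) j₀ k)
              (Finset.mem_univ k₀)) (le_of_eq pere0)
    have split : ∑ i ∈ Finset.Icc 1 (N+2), ∑ j, ∑ k,
        ((C i j k * Pt t i j k + ε * (Pt t i j k * (Real.log (Pt t i j k) - 1)))
          - ((1-t) * (C i j k * Pstar i j k + ε * (Pstar i j k * (Real.log (Pstar i j k) - 1)))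
            + t * (C i j k * P0 N m a b i j k
              + ε * (P0 N m a b i j k * (Real.log (P0 N m a b i j k) - 1)))))
        = (∑ i ∈ Finset.Icc 1 (N+2), ∑ j, ∑ k,
            (C i j k * Pt t i j k + ε * (Pt t i j k * (Real.log (Pt t i j k) - 1))))
          - ∑ i ∈ Finset.Icc 1 (N+2), ∑ j, ∑ k,
            ((1-t) * (C i j k * Pstar i j k + ε * (Pstar i j k * (Real.log (Pstar i j k) - 1)))
              + t * (C i j k * P0 N m a b i j k
                + ε * (P0 N m a b i j k * (Real.log (P0 N m a b i j k) - 1)))) := by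
      rw [← Finset.sum_sub_distrib]
      refine Finset.sum_congr rfl fun i _ => ?_
      rw [← Finset.sum_sub_distrib]
      refine Finset.sum_congr rfl fun j _ => ?_
      rw [← Finset.sum_sub_distrib]
    rw [split] at final
    linarith
  -- choose t small
  set K : ℝ := primalVal N m C ε (P0 N m a b) - primalVal N m C ε Pstar with hK
  set t : ℝ := min (1/2) (Real.exp (-(|K| + 1) / (ε * q₀))) with ht
  have ht0 : 0 < t := lt_min (by norm_num) (Real.exp_pos _)
  have ht1 : t < 1 := lt_of_le_of_lt (min_le_left _ _) (by norm_num)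
  have hlogt : Real.log t ≤ -(|K| + 1) / (ε * q₀) := by
    rw [Real.log_le_iff_le_exp ht0]
    exact min_le_right _ _
  have hmul : ε * (t * q₀ * Real.log t) ≤ -(t * (|K| + 1)) := by
    have hpos : 0 < ε * q₀ := mul_pos hε hq
    have h2 : t * (ε * q₀) * Real.log t ≤ t * (ε * q₀) * (-(|K| + 1) / (ε * q₀)) := by
      refine mul_le_mul_of_nonneg_left hlogt ?_
      positivity
    have h3 : t * (ε * q₀) * (-(|K| + 1) / (ε * q₀)) = -(t * (|K| + 1)) := by
      field_simp
    nlinarith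
  have hfin := key t ht0 ht1
  have hcontr := hmin (Pt t) (hmem_t t ht0.le ht1.le)
  have habs : |K| ≥ K := le_abs_self K
  nlinarith

lemma entry_hasDeriv (A ε p q : ℝ) (hpq : q = 0 ∨ 0 < p) :
    HasDerivAt (fun t : ℝ => A * (p + t * q)
      + ε * ((p + t * q) * (Real.log (p + t * q) - 1))) (q * (A + ε * Real.log p)) 0 := by
  rcases hpq with hq | hp
  · subst hq
    have : (fun t : ℝ => A * (p + t * 0) + ε * ((p + t * 0) * (Real.log (p + t * 0) - 1)))
        = fun _ : ℝ => A * p + ε * (p * (Real.log p - 1)) := by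
      funext t; rw [mul_zero, add_zero]
    rw [this]
    have h0 : (0 : ℝ) * (A + ε * Real.log p) = 0 := by ring
    rw [h0]
    exact hasDerivAt_const 0 _
  · have hu : HasDerivAt (fun t : ℝ => p + t * q) q 0 := by
      simpa using (hasDerivAt_id (0:ℝ)).mul_const q |>.const_add p
    have hu0 : p + 0 * q = p := by ring
    have hxlog : HasDerivAt (fun x : ℝ => x * Real.log x) (Real.log p + 1) p :=
      Real.hasDerivAt_mul_log hp.ne'
    have hcomp : HasDerivAt (fun t : ℝ => (p + t * q) * Real.log (p + t * q))
        ((Real.log p + 1) * q) 0 := by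
      have hxlog' : HasDerivAt (fun x : ℝ => x * Real.log x) (Real.log p + 1) (p + 0 * q) := by
        rwa [hu0]
      exact hxlog'.comp (0:ℝ) hu
    have hfull := (hu.const_mul A).add (((hcomp.sub hu).const_mul ε))
    have heq : (fun t : ℝ => A * (p + t * q)
        + ε * ((p + t * q) * (Real.log (p + t * q) - 1)))
        = fun t : ℝ => A * (p + t * q) + ε * ((p + t * q) * Real.log (p + t * q) - (p + t * q)) := by
      funext t; ring
    rw [heq]
    exact hfull.congr_deriv (by ring)

set_option maxHeartbeats 1000000 in
/-- First-order condition at the minimizer, for feasible directions supported where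
`Pstar` is positive. -/
lemma deriv_zero {a : Fin (m 1) → ℝ} {b : Fin (m (N+3)) → ℝ}
    {C : ∀ i : ℕ, Matrix (Fin (m i)) (Fin (m (i+1))) ℝ} {ε : ℝ}
    (hasum : ∑ j, a j = 1)
    {Pstar : ∀ i : ℕ, Matrix (Fin (m i)) (Fin (m (i+1))) ℝ}
    (hmem : Pstar ∈ GoodSet N m a b)
    (hmin : ∀ Q ∈ GoodSet N m a b, primalVal N m C ε Pstar ≤ primalVal N m C ε Q)
    (Q : ∀ i : ℕ, Matrix (Fin (m i)) (Fin (m (i+1))) ℝ)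
    (hQtrim : ∀ i, i ∉ Finset.Icc 1 (N+2) → Q i = 0)
    (hQrow : ∀ j, ∑ k, Q 1 j k = 0)
    (hQcol : ∀ k, ∑ j, Q (N+2) j k = 0)
    (hQmid : ∀ i, 1 ≤ i → i ≤ N+1 → ∀ k, ∑ j, Q i j k = ∑ l, Q (i+1) k l)
    (hQsupp : ∀ i j k, Q i j k ≠ 0 → 0 < Pstar i j k) :
    ∑ i ∈ Finset.Icc 1 (N+2), ∑ j, ∑ k,
      Q i j k * (C i j k + ε * Real.log (Pstar i j k)) = 0 := by
  classical
  set PQ : ℝ → ∀ i : ℕ, Matrix (Fin (m i)) (Fin (m (i+1))) ℝ :=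
    fun t i => Matrix.of fun j k => Pstar i j k + t * Q i j k with hPQ
  have hPQ_apply : ∀ t i j k, PQ t i j k = Pstar i j k + t * Q i j k := fun t i j k => rfl
  set φ : ℝ → ℝ := fun t => primalVal N m C ε (PQ t) with hφ
  -- derivative
  have hφeq : φ = fun t => ∑ i ∈ Finset.Icc 1 (N+2), ∑ j, ∑ k,
      (C i j k * (Pstar i j k + t * Q i j k)
        + ε * ((Pstar i j k + t * Q i j k) * (Real.log (Pstar i j k + t * Q i j k) - 1))) := by
    funext t
    show primalVal N m C ε (PQ t) = _
    rw [primal_entry]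
    simp only [hPQ_apply]
  have hderiv : HasDerivAt φ (∑ i ∈ Finset.Icc 1 (N+2), ∑ j, ∑ k,
      Q i j k * (C i j k + ε * Real.log (Pstar i j k))) 0 := by
    rw [hφeq]
    refine HasDerivAt.fun_sum fun i _ => HasDerivAt.fun_sum fun j _ => HasDerivAt.fun_sum fun k _ => ?_
    refine entry_hasDeriv _ _ _ _ ?_
    by_cases h : Q i j k = 0
    · exact Or.inl h
    · exact Or.inr (hQsupp i j k h)
  -- eventual membership
  have hfeas : ∀ t : ℝ, FeasibleT N m a b (PQ t) := by
    intro t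
    rw [feasibleT_iff]
    have hf1 := (feasibleT_iff).1 hmem.2.1
    refine ⟨fun j => ?_, fun k => ?_, fun i hi1 hi2 k => ?_⟩
    · simp only [hPQ_apply]
      rw [Finset.sum_add_distrib, ← Finset.mul_sum, hf1.1 j, hQrow j]
      ring
    · simp only [hPQ_apply]
      rw [Finset.sum_add_distrib, ← Finset.mul_sum, hf1.2.1 k, hQcol k]
      ring
    · simp only [hPQ_apply]
      rw [Finset.sum_add_distrib, ← Finset.mul_sum, hf1.2.2 i hi1 hi2 k, hQmid i hi1 hi2 k,
        Finset.sum_add_distrib, ← Finset.mul_sum]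
  have htrim : ∀ t : ℝ, ∀ i, i ∉ Finset.Icc 1 (N+2) → PQ t i = 0 := by
    intro t i hi
    have e1 : Pstar i = 0 := hmem.2.2.1 i hi
    have e2 : Q i = 0 := hQtrim i hi
    funext j k
    rw [hPQ_apply, e1, e2]
    simp
  have hev : ∀ᶠ t in nhds (0:ℝ), ∀ i ∈ Finset.Icc 1 (N+2), ∀ (j : Fin (m i)) (k : Fin (m (i+1))),
      0 ≤ PQ t i j k ∧ PQ t i j k ≤ 2 := by
    rw [Filter.eventually_all_finset]
    intro i hi
    rw [Filter.eventually_all]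
    intro j
    rw [Filter.eventually_all]
    intro k
    rw [Finset.mem_Icc] at hi
    by_cases h : Q i j k = 0
    · refine Filter.Eventually.of_forall fun t => ?_
      rw [hPQ_apply, h, mul_zero, add_zero]
      exact ⟨hmem.1 i hi.1 hi.2 j k,
        le_trans (entry_le_one hmem.1 hmem.2.1 hasum hi.1 hi.2 j k) (by norm_num)⟩
    · have hp := hQsupp i j k h
      have hcont : Filter.Tendsto (fun t : ℝ => Pstar i j k + t * Q i j k) (nhds 0)
          (nhds (Pstar i j k)) := by
        have : Filter.Tendsto (fun t : ℝ => Pstar i j k + t * Q i j k) (nhds 0)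
            (nhds (Pstar i j k + 0 * Q i j k)) := by
          exact (tendsto_const_nhds.add ((continuous_id.mul continuous_const).tendsto 0))
        simpa using this
      have h1 : ∀ᶠ t in nhds (0:ℝ), 0 < Pstar i j k + t * Q i j k :=
        hcont.eventually (eventually_gt_nhds hp)
      have hle : Pstar i j k < 2 :=
        lt_of_le_of_lt (entry_le_one hmem.1 hmem.2.1 hasum hi.1 hi.2 j k) (by norm_num)
      have h2 : ∀ᶠ t in nhds (0:ℝ), Pstar i j k + t * Q i j k < 2 :=
        hcont.eventually (eventually_lt_nhds hle)
      filter_upwards [h1, h2] with t ht1 ht2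
      exact ⟨le_of_lt ht1, le_of_lt ht2⟩
  have hmemev : ∀ᶠ t in nhds (0:ℝ), PQ t ∈ GoodSet N m a b := by
    filter_upwards [hev] with t ht
    refine ⟨fun i h1 h2 j k => (ht i (Finset.mem_Icc.2 ⟨h1, h2⟩) j k).1, hfeas t,
      htrim t, fun i j k => ?_⟩
    by_cases h : 1 ≤ i ∧ i ≤ N+2
    · exact (ht i (Finset.mem_Icc.2 h) j k).2
    · have := htrim t i (by rw [Finset.mem_Icc]; omega)
      rw [this]
      norm_num
  have hPQ0 : PQ 0 = Pstar := by
    funext i j k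
    rw [hPQ_apply]
    ring
  have hφ0 : φ 0 = primalVal N m C ε Pstar := by
    show primalVal N m C ε (PQ 0) = _
    rw [hPQ0]
  have hloc : IsLocalMin φ 0 := by
    filter_upwards [hmemev] with t ht
    rw [hφ0]
    exact hmin _ ht
  have := hloc.deriv_eq_zero
  rwa [hderiv.deriv] at this

lemma delta_sum {n : ℕ} (x x' : Fin n) (g : Fin n → ℝ) :
    ∑ y, ((if y = x then (1:ℝ) else 0) - (if y = x' then 1 else 0)) * g y = g x - g x' := by
  simp only [sub_mul, ite_mul, one_mul, zero_mul, Finset.sum_sub_distrib, Finset.sum_ite_eq',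
    Finset.mem_univ, if_true]

lemma delta_single {n : ℕ} (x : Fin n) (g : Fin n → ℝ) :
    ∑ y, (if y = x then (1:ℝ) else 0) * g y = g x := by
  simp only [ite_mul, one_mul, zero_mul, Finset.sum_ite_eq', Finset.mem_univ, if_true]

section Patterns

variable {a : Fin (m 1) → ℝ} {b : Fin (m (N+3)) → ℝ}
  {C : ∀ i : ℕ, Matrix (Fin (m i)) (Fin (m (i+1))) ℝ} {ε : ℝ}
  {Pstar : ∀ i : ℕ, Matrix (Fin (m i)) (Fin (m (i+1))) ℝ}

/-- Rectangle identity in the first block. -/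
lemma rect1 (hasum : ∑ j, a j = 1)
    (hmem : Pstar ∈ GoodSet N m a b)
    (hmin : ∀ Q ∈ GoodSet N m a b, primalVal N m C ε Pstar ≤ primalVal N m C ε Q)
    (j j' : Fin (m 1)) (k k' : Fin (m 2))
    (hpj : ∀ k'', 0 < Pstar 1 j k'') (hpj' : ∀ k'', 0 < Pstar 1 j' k'') :
    (C 1 j k + ε * Real.log (Pstar 1 j k)) + (C 1 j' k' + ε * Real.log (Pstar 1 j' k'))
      = (C 1 j k' + ε * Real.log (Pstar 1 j k'))
        + (C 1 j' k + ε * Real.log (Pstar 1 j' k)) := by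
  classical
  set X : Matrix (Fin (m 1)) (Fin (m 2)) ℝ := Matrix.of fun j'' k'' =>
    ((if j'' = j then (1:ℝ) else 0) - (if j'' = j' then 1 else 0))
      * ((if k'' = k then (1:ℝ) else 0) - (if k'' = k' then 1 else 0)) with hX
  have hXa : ∀ j'' k'', X j'' k'' =
      ((if j'' = j then (1:ℝ) else 0) - (if j'' = j' then 1 else 0))
        * ((if k'' = k then (1:ℝ) else 0) - (if k'' = k' then 1 else 0)) := fun _ _ => rfl
  set Q : ∀ i : ℕ, Matrix (Fin (m i)) (Fin (m (i+1))) ℝ :=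
    Function.update (fun i => (0 : Matrix (Fin (m i)) (Fin (m (i+1))) ℝ)) 1 X with hQ
  have hQ1 : Q 1 = X := by rw [hQ]; exact Function.update_self _ _ _
  have hQo : ∀ i, i ≠ 1 → Q i = 0 := fun i hi => by rw [hQ]; exact Function.update_of_ne hi _ _
  have hXrow : ∀ j'', ∑ k'', X j'' k'' = 0 := by
    intro j''
    simp only [hXa, ← Finset.mul_sum, Finset.sum_sub_distrib, Finset.sum_ite_eq',
      Finset.mem_univ, if_true]
    ring
  have hXcol : ∀ k'', ∑ j'', X j'' k'' = 0 := by
    intro k''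
    simp only [hXa, ← Finset.sum_mul, Finset.sum_sub_distrib, Finset.sum_ite_eq',
      Finset.mem_univ, if_true]
    ring
  have hzero := deriv_zero hasum hmem hmin Q
    (fun i hi => hQo i (by rw [Finset.mem_Icc] at hi; omega))
    (by intro j''; rw [hQ1]; exact hXrow j'')
    (by intro k''; rw [hQo (N+2) (by omega)]; simp)
    (by
      intro i hi1 hi2 k''
      by_cases h : i = 1
      · subst h
        rw [hQ1, hQo 2 (by omega)]
        simp [hXcol]
      · rw [hQo i h, hQo (i+1) (by omega)]
        simp)
    (by
      intro i j'' k'' hne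
      have hi1 : i = 1 := by
        by_contra h
        rw [hQo i h] at hne
        simp at hne
      subst hi1
      rw [hQ1, hXa] at hne
      have h1 : ((if j'' = j then (1:ℝ) else 0) - (if j'' = j' then 1 else 0)) ≠ 0 :=
        fun h => hne (by rw [h, zero_mul])
      have : j'' = j ∨ j'' = j' := by
        by_contra h
        push_neg at h
        rw [if_neg h.1, if_neg h.2] at h1
        simp at h1
      rcases this with h | h
      · subst h; exact hpj k''
      · subst h; exact hpj' k'')
  have hsum : ∑ i ∈ Finset.Icc 1 (N+2), ∑ j'', ∑ k'',
      Q i j'' k'' * (C i j'' k'' + ε * Real.log (Pstar i j'' k''))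
      = ∑ j'', ∑ k'', X j'' k'' * (C 1 j'' k'' + ε * Real.log (Pstar 1 j'' k'')) := by
    rw [Finset.sum_eq_single_of_mem 1 (Finset.mem_Icc.2 ⟨le_refl 1, by omega⟩)]
    · rw [hQ1]
    · intro i _ hne
      rw [hQo i hne]
      simp
  rw [hsum] at hzero
  have hcompute : ∑ j'', ∑ k'', X j'' k'' * (C 1 j'' k'' + ε * Real.log (Pstar 1 j'' k''))
      = ((C 1 j k + ε * Real.log (Pstar 1 j k)) - (C 1 j k' + ε * Real.log (Pstar 1 j k')))
        - ((C 1 j' k + ε * Real.log (Pstar 1 j' k))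
          - (C 1 j' k' + ε * Real.log (Pstar 1 j' k'))) := by
    have inner : ∀ j'', ∑ k'', X j'' k'' * (C 1 j'' k'' + ε * Real.log (Pstar 1 j'' k''))
        = ((if j'' = j then (1:ℝ) else 0) - (if j'' = j' then 1 else 0))
          * ((C 1 j'' k + ε * Real.log (Pstar 1 j'' k))
            - (C 1 j'' k' + ε * Real.log (Pstar 1 j'' k'))) := by
      intro j''
      simp only [hXa, mul_assoc]
      rw [← Finset.mul_sum, delta_sum k k' (fun k'' => C 1 j'' k'' + ε * Real.log (Pstar 1 j'' k''))]
    rw [Finset.sum_congr rfl fun j'' _ => inner j'']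
    exact delta_sum j j' (fun j'' => (C 1 j'' k + ε * Real.log (Pstar 1 j'' k))
      - (C 1 j'' k' + ε * Real.log (Pstar 1 j'' k')))
  rw [hcompute] at hzero
  linarith

/-- Linking identity between consecutive blocks. -/
lemma link (hasum : ∑ j, a j = 1)
    (hmem : Pstar ∈ GoodSet N m a b)
    (hmin : ∀ Q ∈ GoodSet N m a b, primalVal N m C ε Pstar ≤ primalVal N m C ε Q)
    (i' : ℕ) (hi' : i' ≤ N)
    (j : Fin (m (i'+1))) (k k' : Fin (m (i'+2))) (l : Fin (m (i'+3)))
    (hp1 : 0 < Pstar (i'+1) j k) (hp2 : 0 < Pstar (i'+1) j k')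
    (hp3 : 0 < Pstar (i'+2) k l) (hp4 : 0 < Pstar (i'+2) k' l) :
    ((C (i'+1) j k + ε * Real.log (Pstar (i'+1) j k))
        - (C (i'+1) j k' + ε * Real.log (Pstar (i'+1) j k')))
      + ((C (i'+2) k l + ε * Real.log (Pstar (i'+2) k l))
        - (C (i'+2) k' l + ε * Real.log (Pstar (i'+2) k' l))) = 0 := by
  classical
  set X : Matrix (Fin (m (i'+1))) (Fin (m (i'+2))) ℝ := Matrix.of fun j'' k'' =>
    (if j'' = j then (1:ℝ) else 0)
      * ((if k'' = k then (1:ℝ) else 0) - (if k'' = k' then 1 else 0)) with hX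
  set Y : Matrix (Fin (m (i'+2))) (Fin (m (i'+3))) ℝ := Matrix.of fun k'' l'' =>
    ((if k'' = k then (1:ℝ) else 0) - (if k'' = k' then 1 else 0))
      * (if l'' = l then (1:ℝ) else 0) with hY
  have hXa : ∀ j'' k'', X j'' k'' = (if j'' = j then (1:ℝ) else 0)
      * ((if k'' = k then (1:ℝ) else 0) - (if k'' = k' then 1 else 0)) := fun _ _ => rfl
  have hYa : ∀ k'' l'', Y k'' l'' = ((if k'' = k then (1:ℝ) else 0) - (if k'' = k' then 1 else 0))
      * (if l'' = l then (1:ℝ) else 0) := fun _ _ => rfl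
  set Q : ∀ i : ℕ, Matrix (Fin (m i)) (Fin (m (i+1))) ℝ :=
    Function.update (Function.update
      (fun i => (0 : Matrix (Fin (m i)) (Fin (m (i+1))) ℝ)) (i'+1) X) (i'+2) Y with hQ
  have hQ1 : Q (i'+1) = X := by
    rw [hQ, Function.update_of_ne (by omega : i'+1 ≠ i'+2), Function.update_self]
  have hQ2 : Q (i'+2) = Y := by rw [hQ]; exact Function.update_self _ _ _
  have hQo : ∀ i, i ≠ i'+1 → i ≠ i'+2 → Q i = 0 := fun i h1 h2 => by
    rw [hQ, Function.update_of_ne h2, Function.update_of_ne h1]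
  have hXrow : ∀ j'', ∑ k'', X j'' k'' = 0 := by
    intro j''
    simp only [hXa, ← Finset.mul_sum, Finset.sum_sub_distrib, Finset.sum_ite_eq',
      Finset.mem_univ, if_true]
    ring
  have hXcol : ∀ k'', ∑ j'', X j'' k'' = 0 + ((if k'' = k then (1:ℝ) else 0) - (if k'' = k' then 1 else 0)) := by
    intro k''
    simp only [hXa, ← Finset.sum_mul, Finset.sum_ite_eq', Finset.mem_univ, if_true]
    ring
  have hYrow : ∀ k'', ∑ l'', Y k'' l'' = ((if k'' = k then (1:ℝ) else 0) - (if k'' = k' then 1 else 0)) := by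
    intro k''
    simp only [hYa, ← Finset.mul_sum, Finset.sum_ite_eq', Finset.mem_univ, if_true]
    ring
  have hYcol : ∀ l'', ∑ k'', Y k'' l'' = 0 := by
    intro l''
    simp only [hYa, ← Finset.sum_mul, Finset.sum_sub_distrib, Finset.sum_ite_eq',
      Finset.mem_univ, if_true]
    ring
  have hzero := deriv_zero hasum hmem hmin Q
    (fun i hi => hQo i (by rw [Finset.mem_Icc] at hi; omega) (by rw [Finset.mem_Icc] at hi; omega))
    (by
      intro j''
      by_cases h : i' = 0
      · subst h
        rw [show Q 1 = X from hQ1]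
        exact hXrow j''
      · rw [hQo 1 (by omega) (by omega)]
        simp)
    (by
      intro k''
      by_cases h : i' = N
      · subst h
        rw [hQ2]
        exact hYcol k''
      · rw [hQo (N+2) (by omega) (by omega)]
        simp)
    (by
      intro i hi1 hi2 k''
      by_cases h1 : i = i'+1
      · subst h1
        rw [hQ1, hQ2]
        rw [hXcol k'', hYrow k'']
        ring
      · by_cases h2 : i = i'+2
        · subst h2
          rw [hQ2, hQo (i'+3) (by omega) (by omega)]
          rw [hYcol]
          simp
        · by_cases h3 : i = i'
          · subst h3
            rw [hQo i (by omega) (by omega), hQ1]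
            rw [hXrow]
            simp
          · rw [hQo i h1 h2, hQo (i+1) (by omega) (by omega)]
            simp)
    (by
      intro i j'' k'' hne
      by_cases h1 : i = i'+1
      · subst h1
        rw [hQ1, hXa] at hne
        have hj : j'' = j := by
          by_contra h
          rw [if_neg h, zero_mul] at hne
          exact hne rfl
        have hk : k'' = k ∨ k'' = k' := by
          by_contra h
          push_neg at h
          rw [if_neg h.1, if_neg h.2] at hne
          simp at hne
        subst hj
        rcases hk with h | h
        · subst h; exact hp1
        · subst h; exact hp2
      · by_cases h2 : i = i'+2
        · subst h2
          rw [hQ2, hYa] at hne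
          have hl : k'' = l := by
            by_contra h
            rw [if_neg h, mul_zero] at hne
            exact hne rfl
          have hk : j'' = k ∨ j'' = k' := by
            by_contra h
            push_neg at h
            rw [if_neg h.1, if_neg h.2] at hne
            simp at hne
          subst hl
          rcases hk with h | h
          · subst h; exact hp3
          · subst h; exact hp4
        · rw [hQo i h1 h2] at hne
          simp at hne)
  have hsum : ∑ i ∈ Finset.Icc 1 (N+2), ∑ j'', ∑ k'',
      Q i j'' k'' * (C i j'' k'' + ε * Real.log (Pstar i j'' k''))
      = (∑ j'', ∑ k'', X j'' k'' * (C (i'+1) j'' k'' + ε * Real.log (Pstar (i'+1) j'' k'')))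
        + ∑ k'', ∑ l'', Y k'' l'' * (C (i'+2) k'' l'' + ε * Real.log (Pstar (i'+2) k'' l'')) := by
    rw [Finset.sum_eq_add_of_mem (i'+1) (i'+2)
      (Finset.mem_Icc.2 ⟨by omega, by omega⟩) (Finset.mem_Icc.2 ⟨by omega, by omega⟩)
      (by omega)
      (fun i _ hne => by
        rw [hQo i hne.1 hne.2]
        simp)]
    rw [hQ1, hQ2]
  rw [hsum] at hzero
  have hcomp1 : ∑ j'', ∑ k'', X j'' k'' * (C (i'+1) j'' k'' + ε * Real.log (Pstar (i'+1) j'' k''))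
      = (C (i'+1) j k + ε * Real.log (Pstar (i'+1) j k))
        - (C (i'+1) j k' + ε * Real.log (Pstar (i'+1) j k')) := by
    have inner : ∀ j'', ∑ k'', X j'' k'' * (C (i'+1) j'' k'' + ε * Real.log (Pstar (i'+1) j'' k''))
        = (if j'' = j then (1:ℝ) else 0)
          * ((C (i'+1) j'' k + ε * Real.log (Pstar (i'+1) j'' k))
            - (C (i'+1) j'' k' + ε * Real.log (Pstar (i'+1) j'' k'))) := by
      intro j''
      simp only [hXa, mul_assoc]
      rw [← Finset.mul_sum,
        delta_sum k k' (fun k'' => C (i'+1) j'' k'' + ε * Real.log (Pstar (i'+1) j'' k''))]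
    rw [Finset.sum_congr rfl fun j'' _ => inner j'']
    exact delta_single j (fun j'' => (C (i'+1) j'' k + ε * Real.log (Pstar (i'+1) j'' k))
      - (C (i'+1) j'' k' + ε * Real.log (Pstar (i'+1) j'' k')))
  have hcomp2 : ∑ k'', ∑ l'', Y k'' l'' * (C (i'+2) k'' l'' + ε * Real.log (Pstar (i'+2) k'' l''))
      = (C (i'+2) k l + ε * Real.log (Pstar (i'+2) k l))
        - (C (i'+2) k' l + ε * Real.log (Pstar (i'+2) k' l)) := by
    have inner : ∀ k'', ∑ l'', Y k'' l'' * (C (i'+2) k'' l'' + ε * Real.log (Pstar (i'+2) k'' l''))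
        = ((if k'' = k then (1:ℝ) else 0) - (if k'' = k' then 1 else 0))
          * (C (i'+2) k'' l + ε * Real.log (Pstar (i'+2) k'' l)) := by
      intro k''
      simp only [hYa, mul_assoc]
      rw [← Finset.mul_sum,
        delta_single l (fun l'' => C (i'+2) k'' l'' + ε * Real.log (Pstar (i'+2) k'' l''))]
    rw [Finset.sum_congr rfl fun k'' _ => inner k'']
    exact delta_sum k k' (fun k'' => C (i'+2) k'' l + ε * Real.log (Pstar (i'+2) k'' l))
  rw [hcomp1, hcomp2] at hzero
  linarith

end Patterns

section Potentials

variable {a : Fin (m 1) → ℝ} {b : Fin (m (N+3)) → ℝ}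
  {C : ∀ i : ℕ, Matrix (Fin (m i)) (Fin (m (i+1))) ℝ} {ε : ℝ}
  {Pstar : ∀ i : ℕ, Matrix (Fin (m i)) (Fin (m (i+1))) ℝ}

lemma pos1 (hε : 0 < ε) (ha : ∀ j, 0 ≤ a j) (hb : ∀ k, 0 ≤ b k)
    (hasum : ∑ j, a j = 1) (hbsum : ∑ k, b k = 1) (hm : ∀ i, 0 < m i)
    (hmem : Pstar ∈ GoodSet N m a b)
    (hmin : ∀ Q ∈ GoodSet N m a b, primalVal N m C ε Pstar ≤ primalVal N m C ε Q)
    {j : Fin (m 1)} (hj : 0 < a j) (k : Fin (m 2)) : 0 < Pstar 1 j k := by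
  refine pstar_pos hε ha hb hasum hbsum hm hmem hmin 1 (by omega) (by omega) j k ?_
  rw [P0_apply (by omega) (by omega), wvec_one]
  have h2 : 0 < wvec N m a b 2 k := by
    rw [wvec_mid (by omega) (by omega)]
    have := hm 2
    positivity
  exact mul_pos hj h2

lemma posMid (hε : 0 < ε) (ha : ∀ j, 0 ≤ a j) (hb : ∀ k, 0 ≤ b k)
    (hasum : ∑ j, a j = 1) (hbsum : ∑ k, b k = 1) (hm : ∀ i, 0 < m i)
    (hmem : Pstar ∈ GoodSet N m a b)
    (hmin : ∀ Q ∈ GoodSet N m a b, primalVal N m C ε Pstar ≤ primalVal N m C ε Q)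
    {i : ℕ} (h2 : 2 ≤ i) (hN : i ≤ N+1) (j : Fin (m i)) (k : Fin (m (i+1))) :
    0 < Pstar i j k := by
  refine pstar_pos hε ha hb hasum hbsum hm hmem hmin i (by omega) (by omega) j k ?_
  rw [P0_apply (by omega) (by omega), wvec_mid (by omega) (by omega),
    wvec_mid (by omega) (by omega)]
  have := hm i
  have := hm (i+1)
  positivity

lemma posLast (hε : 0 < ε) (ha : ∀ j, 0 ≤ a j) (hb : ∀ k, 0 ≤ b k)
    (hasum : ∑ j, a j = 1) (hbsum : ∑ k, b k = 1) (hm : ∀ i, 0 < m i)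
    (hmem : Pstar ∈ GoodSet N m a b)
    (hmin : ∀ Q ∈ GoodSet N m a b, primalVal N m C ε Pstar ≤ primalVal N m C ε Q)
    (j : Fin (m (N+2))) {k : Fin (m (N+3))} (hk : 0 < b k) : 0 < Pstar (N+2) j k := by
  refine pstar_pos hε ha hb hasum hbsum hm hmem hmin (N+2) (by omega) (by omega) j k ?_
  rw [P0_apply (by omega) (by omega), wvec_mid (by omega) (by omega)]
  have hbk : wvec N m a b (N+2+1) k = b k := congrFun wvec_last k
  rw [hbk]
  have := hm (N+2)
  positivity

lemma rowpos1 (hmem : Pstar ∈ GoodSet N m a b) {j : Fin (m 1)} {k : Fin (m 2)}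
    (h : 0 < Pstar 1 j k) : 0 < a j := by
  have := feas_row1 hmem.2.1 j
  have hnn : ∀ k', 0 ≤ Pstar 1 j k' := fun k' => hmem.1 1 (by omega) (by omega) j k'
  have : Pstar 1 j k ≤ a j := by
    rw [← this]
    exact Finset.single_le_sum (fun k' _ => hnn k') (Finset.mem_univ k)
  linarith

lemma colposLast (hmem : Pstar ∈ GoodSet N m a b) {j : Fin (m (N+2))} {k : Fin (m (N+3))}
    (h : 0 < Pstar (N+2) j k) : 0 < b k := by
  have := feas_colM hmem.2.1 k
  have hnn : ∀ j', 0 ≤ Pstar (N+2) j' k := fun j' => hmem.1 (N+2) (by omega) (by omega) j' k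
  have : Pstar (N+2) j k ≤ b k := by
    rw [← this]
    exact Finset.single_le_sum (fun j' _ => hnn j') (Finset.mem_univ j)
  linarith

end Potentials

variable (m) in
/-- `D i = C i + ε log P i`. -/
def Dm (C : ∀ i : ℕ, Matrix (Fin (m i)) (Fin (m (i+1))) ℝ) (ε : ℝ)
    (Pstar : ∀ i : ℕ, Matrix (Fin (m i)) (Fin (m (i+1))) ℝ) :
    ∀ i : ℕ, Matrix (Fin (m i)) (Fin (m (i+1))) ℝ :=
  fun i => Matrix.of fun j k => C i j k + ε * Real.log (Pstar i j k)

lemma Dm_apply {C : ∀ i : ℕ, Matrix (Fin (m i)) (Fin (m (i+1))) ℝ} {ε : ℝ}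
    {Pstar : ∀ i : ℕ, Matrix (Fin (m i)) (Fin (m (i+1))) ℝ} (i : ℕ) (j : Fin (m i))
    (k : Fin (m (i+1))) :
    Dm m C ε Pstar i j k = C i j k + ε * Real.log (Pstar i j k) := rfl

variable (m) in
/-- Base points for the potential construction. -/
def basePt (hm : ∀ i, 0 < m i) (j₀ : Fin (m 1)) : ∀ i : ℕ, Fin (m i) :=
  fun i => if h : i = 1 then Fin.cast (congrArg m h.symm) j₀ else ⟨0, hm i⟩

lemma basePt_one {hm : ∀ i, 0 < m i} {j₀ : Fin (m 1)} : basePt m hm j₀ 1 = j₀ := by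
  unfold basePt
  rw [dif_pos rfl]
  exact Fin.ext rfl

variable (m) in
/-- Partial sums of base-point values of `D`. -/
def Sseq (C : ∀ i : ℕ, Matrix (Fin (m i)) (Fin (m (i+1))) ℝ) (ε : ℝ)
    (Pstar : ∀ i : ℕ, Matrix (Fin (m i)) (Fin (m (i+1))) ℝ)
    (hm : ∀ i, 0 < m i) (j₀ : Fin (m 1)) : ℕ → ℝ :=
  fun n => ∑ i' ∈ Finset.Icc 1 n, Dm m C ε Pstar i' (basePt m hm j₀ i') (basePt m hm j₀ (i'+1))

variable (N m) in
/-- The dual potentials. -/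
def gfun (C : ∀ i : ℕ, Matrix (Fin (m i)) (Fin (m (i+1))) ℝ) (ε : ℝ)
    (Pstar : ∀ i : ℕ, Matrix (Fin (m i)) (Fin (m (i+1))) ℝ)
    (hm : ∀ i, 0 < m i) (j₀ : Fin (m 1)) : ∀ i : ℕ, Fin (m i) → ℝ := fun i =>
  match i with
  | 0 => fun _ => 0
  | 1 => fun j => Dm m C ε Pstar 1 j (basePt m hm j₀ 2)
  | (i'+2) =>
    if h : i' = N+1 then
      fun k => Dm m C ε Pstar (N+2) (basePt m hm j₀ (N+2)) (Fin.cast (congrArg m (by rw [h])) k)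
        - (Sseq m C ε Pstar hm j₀ 1 - Sseq m C ε Pstar hm j₀ (N+1))
    else
      fun k => (Sseq m C ε Pstar hm j₀ 1 - Sseq m C ε Pstar hm j₀ i')
        - Dm m C ε Pstar (i'+1) (basePt m hm j₀ (i'+1)) k

section GLemmas

variable {C : ∀ i : ℕ, Matrix (Fin (m i)) (Fin (m (i+1))) ℝ} {ε : ℝ}
  {Pstar : ∀ i : ℕ, Matrix (Fin (m i)) (Fin (m (i+1))) ℝ}
  {hm : ∀ i, 0 < m i} {j₀ : Fin (m 1)}

lemma gfun_one (j : Fin (m 1)) :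
    gfun N m C ε Pstar hm j₀ 1 j = Dm m C ε Pstar 1 j (basePt m hm j₀ 2) := rfl

lemma gfun_mid (i' : ℕ) (h : i' ≠ N+1) (k : Fin (m (i'+2))) :
    gfun N m C ε Pstar hm j₀ (i'+2) k
      = (Sseq m C ε Pstar hm j₀ 1 - Sseq m C ε Pstar hm j₀ i')
        - Dm m C ε Pstar (i'+1) (basePt m hm j₀ (i'+1)) k := by
  simp only [gfun]
  rw [dif_neg h]

lemma gfun_last (k : Fin (m (N+3))) :
    gfun N m C ε Pstar hm j₀ (N+3) k
      = Dm m C ε Pstar (N+2) (basePt m hm j₀ (N+2)) k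
        - (Sseq m C ε Pstar hm j₀ 1 - Sseq m C ε Pstar hm j₀ (N+1)) := by
  show gfun N m C ε Pstar hm j₀ ((N+1)+2) k = _
  simp only [gfun]
  rw [dif_pos trivial]
  norm_num

lemma Sseq_zero : Sseq m C ε Pstar hm j₀ 0 = 0 := by
  unfold Sseq
  rw [Finset.Icc_eq_empty (by omega)]
  simp

lemma Sseq_succ (n : ℕ) : Sseq m C ε Pstar hm j₀ (n+1)
    = Sseq m C ε Pstar hm j₀ n
      + Dm m C ε Pstar (n+1) (basePt m hm j₀ (n+1)) (basePt m hm j₀ (n+2)) := by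
  unfold Sseq
  rw [Finset.sum_Icc_succ_top (by omega)]

end GLemmas

section MainIdentities

variable {a : Fin (m 1) → ℝ} {b : Fin (m (N+3)) → ℝ}
  {C : ∀ i : ℕ, Matrix (Fin (m i)) (Fin (m (i+1))) ℝ} {ε : ℝ}
  {Pstar : ∀ i : ℕ, Matrix (Fin (m i)) (Fin (m (i+1))) ℝ}

lemma posRowBase (hε : 0 < ε) (ha : ∀ j, 0 ≤ a j) (hb : ∀ k, 0 ≤ b k)
    (hasum : ∑ j, a j = 1) (hbsum : ∑ k, b k = 1) (hm : ∀ i, 0 < m i)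
    (hmem : Pstar ∈ GoodSet N m a b)
    (hmin : ∀ Q ∈ GoodSet N m a b, primalVal N m C ε Pstar ≤ primalVal N m C ε Q)
    {j₀ : Fin (m 1)} (hj₀ : 0 < a j₀)
    (i'' : ℕ) (h : i''+1 ≤ N+1) (x : Fin (m (i''+2))) :
    0 < Pstar (i''+1) (basePt m hm j₀ (i''+1)) x := by
  cases i'' with
  | zero =>
    show 0 < Pstar 1 (basePt m hm j₀ 1) x
    rw [basePt_one]
    exact pos1 hε ha hb hasum hbsum hm hmem hmin hj₀ x
  | succ n =>
    exact posMid hε ha hb hasum hbsum hm hmem hmin (by omega : 2 ≤ n+2) (by omega) _ x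

lemma mainMid (hε : 0 < ε) (ha : ∀ j, 0 ≤ a j) (hb : ∀ k, 0 ≤ b k)
    (hasum : ∑ j, a j = 1) (hbsum : ∑ k, b k = 1) (hm : ∀ i, 0 < m i)
    (hmem : Pstar ∈ GoodSet N m a b)
    (hmin : ∀ Q ∈ GoodSet N m a b, primalVal N m C ε Pstar ≤ primalVal N m C ε Q)
    {j₀ : Fin (m 1)} (hj₀ : 0 < a j₀)
    (i' : ℕ) (h : i'+1 ≤ N+1) (j : Fin (m (i'+1))) (k : Fin (m (i'+2)))
    (hp : 0 < Pstar (i'+1) j k) :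
    Dm m C ε Pstar (i'+1) j k
      = gfun N m C ε Pstar hm j₀ (i'+1) j - gfun N m C ε Pstar hm j₀ (i'+2) k := by
  cases i' with
  | zero =>
    show Dm m C ε Pstar 1 j k
      = gfun N m C ε Pstar hm j₀ 1 j - gfun N m C ε Pstar hm j₀ 2 k
    have hg2 : gfun N m C ε Pstar hm j₀ 2 k
        = (Sseq m C ε Pstar hm j₀ 1 - Sseq m C ε Pstar hm j₀ 0)
          - Dm m C ε Pstar 1 (basePt m hm j₀ 1) k := gfun_mid 0 (by omega) k
    have hS0 : Sseq m C ε Pstar hm j₀ 0 = 0 := Sseq_zero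
    have hS1 : Sseq m C ε Pstar hm j₀ 1
        = Sseq m C ε Pstar hm j₀ 0
          + Dm m C ε Pstar 1 (basePt m hm j₀ 1) (basePt m hm j₀ 2) := Sseq_succ 0
    have hpj : ∀ k'', 0 < Pstar 1 j k'' :=
      pos1 hε ha hb hasum hbsum hm hmem hmin (rowpos1 hmem hp)
    have hpj' : ∀ k'', 0 < Pstar 1 j₀ k'' := pos1 hε ha hb hasum hbsum hm hmem hmin hj₀
    have hrect := rect1 hasum hmem hmin j j₀ k (basePt m hm j₀ 2) hpj hpj'
    rw [hg2, gfun_one, hS1, hS0, basePt_one]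
    simp only [Dm_apply] at *
    linarith
  | succ i'' =>
    show Dm m C ε Pstar (i''+2) j k
      = gfun N m C ε Pstar hm j₀ (i''+2) j - gfun N m C ε Pstar hm j₀ (i''+3) k
    have hg1 : gfun N m C ε Pstar hm j₀ (i''+2) j
        = (Sseq m C ε Pstar hm j₀ 1 - Sseq m C ε Pstar hm j₀ i'')
          - Dm m C ε Pstar (i''+1) (basePt m hm j₀ (i''+1)) j := gfun_mid i'' (by omega) j
    have hg2 : gfun N m C ε Pstar hm j₀ (i''+3) k
        = (Sseq m C ε Pstar hm j₀ 1 - Sseq m C ε Pstar hm j₀ (i''+1))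
          - Dm m C ε Pstar (i''+2) (basePt m hm j₀ (i''+2)) k := gfun_mid (i''+1) (by omega) k
    have hS : Sseq m C ε Pstar hm j₀ (i''+1)
        = Sseq m C ε Pstar hm j₀ i''
          + Dm m C ε Pstar (i''+1) (basePt m hm j₀ (i''+1)) (basePt m hm j₀ (i''+2)) :=
      Sseq_succ i''
    have hp1 : 0 < Pstar (i''+1) (basePt m hm j₀ (i''+1)) j :=
      posRowBase hε ha hb hasum hbsum hm hmem hmin hj₀ i'' (by omega) j
    have hp2 : 0 < Pstar (i''+1) (basePt m hm j₀ (i''+1)) (basePt m hm j₀ (i''+2)) :=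
      posRowBase hε ha hb hasum hbsum hm hmem hmin hj₀ i'' (by omega) _
    have hp4 : 0 < Pstar (i''+2) (basePt m hm j₀ (i''+2)) k :=
      posMid hε ha hb hasum hbsum hm hmem hmin (by omega : 2 ≤ i''+2) (by omega) _ k
    have hlink := link hasum hmem hmin i'' (by omega) (basePt m hm j₀ (i''+1))
      j (basePt m hm j₀ (i''+2)) k hp1 hp2 hp hp4
    rw [hg1, hg2, hS]
    simp only [Dm_apply] at *
    linarith

lemma mainLast (hε : 0 < ε) (ha : ∀ j, 0 ≤ a j) (hb : ∀ k, 0 ≤ b k)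
    (hasum : ∑ j, a j = 1) (hbsum : ∑ k, b k = 1) (hm : ∀ i, 0 < m i)
    (hmem : Pstar ∈ GoodSet N m a b)
    (hmin : ∀ Q ∈ GoodSet N m a b, primalVal N m C ε Pstar ≤ primalVal N m C ε Q)
    {j₀ : Fin (m 1)} (hj₀ : 0 < a j₀)
    (j : Fin (m (N+2))) (k : Fin (m (N+3))) (hp : 0 < Pstar (N+2) j k) :
    Dm m C ε Pstar (N+2) j k
      = gfun N m C ε Pstar hm j₀ (N+2) j + gfun N m C ε Pstar hm j₀ (N+3) k := by
  have hg1 : gfun N m C ε Pstar hm j₀ (N+2) j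
      = (Sseq m C ε Pstar hm j₀ 1 - Sseq m C ε Pstar hm j₀ N)
        - Dm m C ε Pstar (N+1) (basePt m hm j₀ (N+1)) j := gfun_mid N (by omega) j
  have hg2 := gfun_last (C := C) (ε := ε) (Pstar := Pstar) (hm := hm) (j₀ := j₀) k
  have hS : Sseq m C ε Pstar hm j₀ (N+1)
      = Sseq m C ε Pstar hm j₀ N
        + Dm m C ε Pstar (N+1) (basePt m hm j₀ (N+1)) (basePt m hm j₀ (N+2)) :=
    Sseq_succ N
  have hp1 : 0 < Pstar (N+1) (basePt m hm j₀ (N+1)) j :=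
    posRowBase hε ha hb hasum hbsum hm hmem hmin hj₀ N (by omega) j
  have hp2 : 0 < Pstar (N+1) (basePt m hm j₀ (N+1)) (basePt m hm j₀ (N+2)) :=
    posRowBase hε ha hb hasum hbsum hm hmem hmin hj₀ N (by omega) _
  have hp4 : 0 < Pstar (N+2) (basePt m hm j₀ (N+2)) k :=
    posLast hε ha hb hasum hbsum hm hmem hmin _ (colposLast hmem hp)
  have hlink := link hasum hmem hmin N (le_refl N) (basePt m hm j₀ (N+1))
    j (basePt m hm j₀ (N+2)) k hp1 hp2 hp hp4
  rw [hg1, hg2, hS]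
  simp only [Dm_apply] at *
  linarith

end MainIdentities

variable (N m) in
/-- The approximate dual potentials, `-T` on the zero-mass rows/columns. -/
noncomputable def fT (a : Fin (m 1) → ℝ) (b : Fin (m (N+3)) → ℝ)
    (C : ∀ i : ℕ, Matrix (Fin (m i)) (Fin (m (i+1))) ℝ) (ε : ℝ)
    (Pstar : ∀ i : ℕ, Matrix (Fin (m i)) (Fin (m (i+1))) ℝ)
    (hm : ∀ i, 0 < m i) (j₀ : Fin (m 1)) (T : ℝ) : ∀ i : ℕ, Fin (m i) → ℝ := fun i =>
  if h : i = 1 then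
    fun j => if 0 < a (Fin.cast (congrArg m h) j) then gfun N m C ε Pstar hm j₀ i j else -T
  else if h2 : i = N+3 then
    fun k => if 0 < b (Fin.cast (congrArg m h2) k) then gfun N m C ε Pstar hm j₀ i k else -T
  else gfun N m C ε Pstar hm j₀ i

section FT

variable {a : Fin (m 1) → ℝ} {b : Fin (m (N+3)) → ℝ}
  {C : ∀ i : ℕ, Matrix (Fin (m i)) (Fin (m (i+1))) ℝ} {ε : ℝ}
  {Pstar : ∀ i : ℕ, Matrix (Fin (m i)) (Fin (m (i+1))) ℝ}
  {hm : ∀ i, 0 < m i} {j₀ : Fin (m 1)} {T : ℝ}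

lemma fT_one (j : Fin (m 1)) :
    fT N m a b C ε Pstar hm j₀ T 1 j
      = if 0 < a j then gfun N m C ε Pstar hm j₀ 1 j else -T := by
  unfold fT
  rw [dif_pos rfl]
  congr 1

lemma fT_mid {i : ℕ} (h1 : 2 ≤ i) (h2 : i ≤ N+2) :
    fT N m a b C ε Pstar hm j₀ T i = gfun N m C ε Pstar hm j₀ i := by
  unfold fT
  rw [dif_neg (by omega), dif_neg (by omega)]

lemma fT_last (k : Fin (m (N+3))) :
    fT N m a b C ε Pstar hm j₀ T (N+3) k
      = if 0 < b k then gfun N m C ε Pstar hm j₀ (N+3) k else -T := by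
  unfold fT
  rw [dif_neg (by omega), dif_pos rfl]
  congr 1

end FT

lemma tendsto_exp_shift {ε : ℝ} (hε : 0 < ε) (c : ℝ) :
    Filter.Tendsto (fun T : ℝ => Real.exp ((c - T)/ε)) Filter.atTop (nhds 0) := by
  apply Real.tendsto_exp_atBot.comp
  apply Filter.Tendsto.atBot_div_const hε
  apply Filter.tendsto_atBot_add_const_left
  exact Filter.tendsto_neg_atTop_atBot

section Assembly

variable {a : Fin (m 1) → ℝ} {b : Fin (m (N+3)) → ℝ}
  {C : ∀ i : ℕ, Matrix (Fin (m i)) (Fin (m (i+1))) ℝ} {ε : ℝ}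
  {Pstar : ∀ i : ℕ, Matrix (Fin (m i)) (Fin (m (i+1))) ℝ}

lemma dual_tendsto (hε : 0 < ε) (ha : ∀ j, 0 ≤ a j) (hb : ∀ k, 0 ≤ b k)
    (hasum : ∑ j, a j = 1) (hbsum : ∑ k, b k = 1) (hm : ∀ i, 0 < m i)
    (hmem : Pstar ∈ GoodSet N m a b)
    (hmin : ∀ Q ∈ GoodSet N m a b, primalVal N m C ε Pstar ≤ primalVal N m C ε Q)
    {j₀ : Fin (m 1)} (hj₀ : 0 < a j₀) :
    Filter.Tendsto (fun T => dualGen N m C a b ε (fT N m a b C ε Pstar hm j₀ T))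
      Filter.atTop
      (nhds ((∑ j, gfun N m C ε Pstar hm j₀ 1 j * a j)
        + (∑ k, gfun N m C ε Pstar hm j₀ (N+3) k * b k)
        - ε * ((∑ j, ∑ k, Pstar (N+2) j k)
          + ∑ i ∈ Finset.Icc 1 (N+1), ∑ j, ∑ k, Pstar i j k))) := by
  have hlinA : ∀ T, ∑ j, fT N m a b C ε Pstar hm j₀ T 1 j * a j
      = ∑ j, gfun N m C ε Pstar hm j₀ 1 j * a j := by
    intro T
    refine Finset.sum_congr rfl fun j _ => ?_
    rw [fT_one]
    by_cases h : 0 < a j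
    · rw [if_pos h]
    · have h0 : a j = 0 := le_antisymm (not_lt.1 h) (ha j)
      rw [if_neg h, h0]
      ring
  have hlinB : ∀ T, ∑ k, fT N m a b C ε Pstar hm j₀ T (N+3) k * b k
      = ∑ k, gfun N m C ε Pstar hm j₀ (N+3) k * b k := by
    intro T
    refine Finset.sum_congr rfl fun k _ => ?_
    rw [fT_last]
    by_cases h : 0 < b k
    · rw [if_pos h]
    · have h0 : b k = 0 := le_antisymm (not_lt.1 h) (hb k)
      rw [if_neg h, h0]
      ring
  have hmidterm : ∀ i, 1 ≤ i → i ≤ N+1 → ∀ (j : Fin (m i)) (k : Fin (m (i+1))),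
      Filter.Tendsto (fun T => Real.exp ((fT N m a b C ε Pstar hm j₀ T i j
        - fT N m a b C ε Pstar hm j₀ T (i+1) k - C i j k)/ε)) Filter.atTop
        (nhds (Pstar i j k)) := by
    intro i h1 h2 j k
    obtain ⟨i', rfl⟩ : ∃ i', i = i' + 1 := ⟨i-1, by omega⟩
    have hfk : ∀ T, fT N m a b C ε Pstar hm j₀ T (i'+1+1) k
        = gfun N m C ε Pstar hm j₀ (i'+1+1) k := fun T => by
      rw [fT_mid (by omega) (by omega)]
    rcases Nat.eq_zero_or_pos i' with hi' | hi'
    · subst hi'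
      by_cases hgood : 0 < a j
      · have hp : 0 < Pstar (0+1) j k :=
          pos1 hε ha hb hasum hbsum hm hmem hmin hgood k
        have hD := mainMid hε ha hb hasum hbsum hm hmem hmin hj₀ 0 (by omega) j k hp
        simp only [Dm_apply] at hD
        have hconst : ∀ T, Real.exp ((fT N m a b C ε Pstar hm j₀ T (0+1) j
            - fT N m a b C ε Pstar hm j₀ T (0+1+1) k - C (0+1) j k)/ε)
            = Pstar (0+1) j k := by
          intro T
          have h1' : fT N m a b C ε Pstar hm j₀ T (0+1) j
              = gfun N m C ε Pstar hm j₀ (0+1) j := by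
            rw [show fT N m a b C ε Pstar hm j₀ T (0+1) j
              = if 0 < a j then gfun N m C ε Pstar hm j₀ 1 j else -T from fT_one j, if_pos hgood]
          rw [h1', hfk T]
          have hexp : (gfun N m C ε Pstar hm j₀ (0+1) j
              - gfun N m C ε Pstar hm j₀ (0+1+1) k - C (0+1) j k)/ε
              = Real.log (Pstar (0+1) j k) := by
            rw [show gfun N m C ε Pstar hm j₀ (0+1+1) k
              = gfun N m C ε Pstar hm j₀ (0+2) k from rfl]
            field_simp
            linarith
          rw [hexp, Real.exp_log hp]
        rw [funext hconst]
        exact tendsto_const_nhds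
      · have haj : a j = 0 := le_antisymm (not_lt.1 hgood) (ha j)
        have hzero : Pstar (0+1) j k = 0 := by
          have hsum := feas_row1 hmem.2.1 j
          have hnn : ∀ k', 0 ≤ Pstar 1 j k' := fun k' => hmem.1 1 (by omega) (by omega) j k'
          have hle : Pstar 1 j k ≤ a j := by
            rw [← hsum]
            exact Finset.single_le_sum (fun k' _ => hnn k') (Finset.mem_univ k)
          exact le_antisymm (by linarith) (hnn k)
        rw [hzero]
        have hfun : (fun T => Real.exp ((fT N m a b C ε Pstar hm j₀ T (0+1) j
            - fT N m a b C ε Pstar hm j₀ T (0+1+1) k - C (0+1) j k)/ε))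
            = fun T => Real.exp (((- gfun N m C ε Pstar hm j₀ (0+1+1) k - C (0+1) j k) - T)/ε) := by
          funext T
          rw [show fT N m a b C ε Pstar hm j₀ T (0+1) j
            = if 0 < a j then gfun N m C ε Pstar hm j₀ 1 j else -T from fT_one j,
            if_neg hgood, hfk T]
          congr 1
          ring
        rw [hfun]
        exact tendsto_exp_shift hε _
    · have hp : 0 < Pstar (i'+1) j k :=
        posMid hε ha hb hasum hbsum hm hmem hmin (by omega) (by omega) j k
      have hD := mainMid hε ha hb hasum hbsum hm hmem hmin hj₀ i' (by omega) j k hp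
      simp only [Dm_apply] at hD
      have hconst : ∀ T, Real.exp ((fT N m a b C ε Pstar hm j₀ T (i'+1) j
          - fT N m a b C ε Pstar hm j₀ T (i'+1+1) k - C (i'+1) j k)/ε)
          = Pstar (i'+1) j k := by
        intro T
        rw [fT_mid (by omega) (by omega), hfk T]
        have hexp : (gfun N m C ε Pstar hm j₀ (i'+1) j
            - gfun N m C ε Pstar hm j₀ (i'+1+1) k - C (i'+1) j k)/ε
            = Real.log (Pstar (i'+1) j k) := by
          rw [show gfun N m C ε Pstar hm j₀ (i'+1+1) k
            = gfun N m C ε Pstar hm j₀ (i'+2) k from rfl]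
          field_simp
          linarith
        rw [hexp, Real.exp_log hp]
      rw [funext hconst]
      exact tendsto_const_nhds
  have hlastterm : ∀ (j : Fin (m (N+2))) (k : Fin (m (N+3))),
      Filter.Tendsto (fun T => Real.exp ((fT N m a b C ε Pstar hm j₀ T (N+2) j
        + fT N m a b C ε Pstar hm j₀ T (N+3) k - C (N+2) j k)/ε)) Filter.atTop
        (nhds (Pstar (N+2) j k)) := by
    intro j k
    have hfj : ∀ T, fT N m a b C ε Pstar hm j₀ T (N+2) j
        = gfun N m C ε Pstar hm j₀ (N+2) j := fun T => by
      rw [fT_mid (by omega) (by omega)]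
    by_cases hgood : 0 < b k
    · have hp : 0 < Pstar (N+2) j k :=
        posLast hε ha hb hasum hbsum hm hmem hmin j hgood
      have hD := mainLast hε ha hb hasum hbsum hm hmem hmin hj₀ j k hp
      simp only [Dm_apply] at hD
      have hconst : ∀ T, Real.exp ((fT N m a b C ε Pstar hm j₀ T (N+2) j
          + fT N m a b C ε Pstar hm j₀ T (N+3) k - C (N+2) j k)/ε)
          = Pstar (N+2) j k := by
        intro T
        rw [hfj T, fT_last, if_pos hgood]
        have hexp : (gfun N m C ε Pstar hm j₀ (N+2) j
            + gfun N m C ε Pstar hm j₀ (N+3) k - C (N+2) j k)/ε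
            = Real.log (Pstar (N+2) j k) := by
          field_simp
          linarith
        rw [hexp, Real.exp_log hp]
      rw [funext hconst]
      exact tendsto_const_nhds
    · have hbk : b k = 0 := le_antisymm (not_lt.1 hgood) (hb k)
      have hzero : Pstar (N+2) j k = 0 := by
        have hsum := feas_colM hmem.2.1 k
        have hnn : ∀ j', 0 ≤ Pstar (N+2) j' k := fun j' =>
          hmem.1 (N+2) (by omega) (by omega) j' k
        have hle : Pstar (N+2) j k ≤ b k := by
          rw [← hsum]
          exact Finset.single_le_sum (fun j' _ => hnn j') (Finset.mem_univ j)
        exact le_antisymm (by linarith) (hnn j)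
      rw [hzero]
      have hfun : (fun T => Real.exp ((fT N m a b C ε Pstar hm j₀ T (N+2) j
          + fT N m a b C ε Pstar hm j₀ T (N+3) k - C (N+2) j k)/ε))
          = fun T => Real.exp (((gfun N m C ε Pstar hm j₀ (N+2) j - C (N+2) j k) - T)/ε) := by
        funext T
        rw [hfj T, fT_last, if_neg hgood]
        congr 1
        ring
      rw [hfun]
      exact tendsto_exp_shift hε _
  unfold dualGen
  refine Filter.Tendsto.sub (Filter.Tendsto.add ?_ ?_) (Filter.Tendsto.const_mul ε
    (Filter.Tendsto.add ?_ ?_))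
  · rw [funext hlinA]
    exact tendsto_const_nhds
  · rw [funext hlinB]
    exact tendsto_const_nhds
  · exact tendsto_finset_sum _ fun j _ => tendsto_finset_sum _ fun k _ => hlastterm j k
  · exact tendsto_finset_sum _ fun i hi => tendsto_finset_sum _ fun j _ =>
      tendsto_finset_sum _ fun k _ =>
        hmidterm i (Finset.mem_Icc.1 hi).1 (Finset.mem_Icc.1 hi).2 j k

lemma value_eq (hε : 0 < ε) (ha : ∀ j, 0 ≤ a j) (hb : ∀ k, 0 ≤ b k)
    (hasum : ∑ j, a j = 1) (hbsum : ∑ k, b k = 1) (hm : ∀ i, 0 < m i)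
    (hmem : Pstar ∈ GoodSet N m a b)
    (hmin : ∀ Q ∈ GoodSet N m a b, primalVal N m C ε Pstar ≤ primalVal N m C ε Q)
    {j₀ : Fin (m 1)} (hj₀ : 0 < a j₀) :
    (∑ j, gfun N m C ε Pstar hm j₀ 1 j * a j)
      + (∑ k, gfun N m C ε Pstar hm j₀ (N+3) k * b k)
      - ε * ((∑ j, ∑ k, Pstar (N+2) j k)
        + ∑ i ∈ Finset.Icc 1 (N+1), ∑ j, ∑ k, Pstar i j k)
    = primalVal N m C ε Pstar := by
  have tel := telescope hmem.2.1 (gfun N m C ε Pstar hm j₀)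
  rw [primal_entry, Finset.sum_Icc_succ_top (by omega : 1 ≤ N+2)]
  have hmid : ∀ i ∈ Finset.Icc 1 (N+1), ∀ (j : Fin (m i)) (k : Fin (m (i+1))),
      C i j k * Pstar i j k + ε * (Pstar i j k * (Real.log (Pstar i j k) - 1))
        = Pstar i j k * (gfun N m C ε Pstar hm j₀ i j - gfun N m C ε Pstar hm j₀ (i+1) k)
          - ε * Pstar i j k := by
    intro i hi j k
    rw [Finset.mem_Icc] at hi
    rcases eq_or_lt_of_le (hmem.1 i hi.1 (by omega) j k) with h0 | hp
    · rw [← h0]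
      simp
    · obtain ⟨i', rfl⟩ : ∃ i', i = i' + 1 := ⟨i-1, by omega⟩
      have hD := mainMid hε ha hb hasum hbsum hm hmem hmin hj₀ i' (by omega) j k hp
      simp only [Dm_apply] at hD
      rw [show gfun N m C ε Pstar hm j₀ (i'+1+1) k
        = gfun N m C ε Pstar hm j₀ (i'+2) k from rfl, ← hD]
      ring
  have hlast : ∀ (j : Fin (m (N+2))) (k : Fin (m (N+3))),
      C (N+2) j k * Pstar (N+2) j k
          + ε * (Pstar (N+2) j k * (Real.log (Pstar (N+2) j k) - 1))
        = Pstar (N+2) j k * (gfun N m C ε Pstar hm j₀ (N+2) j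
            + gfun N m C ε Pstar hm j₀ (N+3) k) - ε * Pstar (N+2) j k := by
    intro j k
    rcases eq_or_lt_of_le (hmem.1 (N+2) (by omega) (by omega) j k) with h0 | hp
    · rw [← h0]
      simp
    · have hD := mainLast hε ha hb hasum hbsum hm hmem hmin hj₀ j k hp
      simp only [Dm_apply] at hD
      rw [← hD]
      ring
  have e1 : ∑ i ∈ Finset.Icc 1 (N+1), ∑ j, ∑ k,
      (C i j k * Pstar i j k + ε * (Pstar i j k * (Real.log (Pstar i j k) - 1)))
      = (∑ i ∈ Finset.Icc 1 (N+1), ∑ j, ∑ k,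
          Pstar i j k * (gfun N m C ε Pstar hm j₀ i j - gfun N m C ε Pstar hm j₀ (i+1) k))
        - ε * ∑ i ∈ Finset.Icc 1 (N+1), ∑ j, ∑ k, Pstar i j k := by
    rw [Finset.mul_sum, ← Finset.sum_sub_distrib]
    refine Finset.sum_congr rfl fun i hi => ?_
    rw [Finset.mul_sum, ← Finset.sum_sub_distrib]
    refine Finset.sum_congr rfl fun j _ => ?_
    rw [Finset.mul_sum, ← Finset.sum_sub_distrib]
    exact Finset.sum_congr rfl fun k _ => hmid i hi j k
  have e2 : ∑ j, ∑ k, (C (N+2) j k * Pstar (N+2) j k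
        + ε * (Pstar (N+2) j k * (Real.log (Pstar (N+2) j k) - 1)))
      = (∑ j, ∑ k, Pstar (N+2) j k * (gfun N m C ε Pstar hm j₀ (N+2) j
          + gfun N m C ε Pstar hm j₀ (N+3) k))
        - ε * ∑ j, ∑ k, Pstar (N+2) j k := by
    rw [Finset.mul_sum, ← Finset.sum_sub_distrib]
    refine Finset.sum_congr rfl fun j _ => ?_
    rw [Finset.mul_sum, ← Finset.sum_sub_distrib]
    exact Finset.sum_congr rfl fun k _ => hlast j k
  rw [e1, e2]
  linarith

end Assembly

end SeqOTAux

/-- **Strong duality for regularized sequentially composed optimal transport**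
(Prop. 2.3): the optimal value of the regularized primal problem over feasible tuples of
nonnegative plans equals the optimal value of the Lagrange dual problem. -/
theorem strong_duality_regularized_seqOT
    (N : ℕ) (m : ℕ → ℕ) (hm : ∀ i, 0 < m i)
    (C : ∀ i : ℕ, Matrix (Fin (m i)) (Fin (m (i+1))) ℝ)
    (hC : ∀ i, ∀ j k, 0 ≤ C i j k)
    (a : Fin (m 1) → ℝ) (b : Fin (m (N+3)) → ℝ)
    (ha : ∀ j, 0 ≤ a j) (hb : ∀ k, 0 ≤ b k)
    (hasum : ∑ j, a j = 1) (hbsum : ∑ k, b k = 1)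
    (ε : ℝ) (hε : 0 < ε) :
    sInf {v : ℝ | ∃ P : ∀ i : ℕ, Matrix (Fin (m i)) (Fin (m (i+1))) ℝ,
        NonnegT N m P ∧ FeasibleT N m a b P ∧ v = primalVal N m C ε P}
      = sSup {v : ℝ | ∃ f : ∀ i : ℕ, Fin (m i) → ℝ, v = dualGen N m C a b ε f} := by
  classical
  obtain ⟨Pstar, hmem, hmin⟩ := SeqOTAux.exists_minimizer ha hb hasum hbsum hm C ε
  obtain ⟨j₀, hj₀⟩ : ∃ j, 0 < a j := by
    by_contra h
    push_neg at h
    have hz : ∀ j, a j = 0 := fun j => le_antisymm (h j) (ha j)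
    rw [Finset.sum_congr rfl fun j _ => hz j] at hasum
    simp at hasum
  have hglobal := SeqOTAux.min_global hasum hmin
  have hub : ∀ v ∈ {v : ℝ | ∃ f : ∀ i : ℕ, Fin (m i) → ℝ, v = dualGen N m C a b ε f},
      v ≤ primalVal N m C ε Pstar := by
    rintro v ⟨f, rfl⟩
    exact SeqOTAux.weak_duality hε hmem.1 hmem.2.1 f
  have hbdd : BddAbove {v : ℝ | ∃ f : ∀ i : ℕ, Fin (m i) → ℝ, v = dualGen N m C a b ε f} :=
    ⟨primalVal N m C ε Pstar, hub⟩
  have hDSne : {v : ℝ | ∃ f : ∀ i : ℕ, Fin (m i) → ℝ, v = dualGen N m C a b ε f}.Nonempty :=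
    ⟨_, ⟨fun _ _ => 0, rfl⟩⟩
  have htend := SeqOTAux.dual_tendsto hε ha hb hasum hbsum hm hmem hmin hj₀
  rw [SeqOTAux.value_eq hε ha hb hasum hbsum hm hmem hmin hj₀] at htend
  have hsup_ge : primalVal N m C ε Pstar
      ≤ sSup {v : ℝ | ∃ f : ∀ i : ℕ, Fin (m i) → ℝ, v = dualGen N m C a b ε f} :=
    le_of_tendsto htend (Filter.Eventually.of_forall fun T =>
      le_csSup hbdd ⟨SeqOTAux.fT N m a b C ε Pstar hm j₀ T, rfl⟩)
  have hsup_le : sSup {v : ℝ | ∃ f : ∀ i : ℕ, Fin (m i) → ℝ, v = dualGen N m C a b ε f}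
      ≤ primalVal N m C ε Pstar := csSup_le hDSne hub
  have hmemPS : primalVal N m C ε Pstar ∈ {v : ℝ |
      ∃ P : ∀ i : ℕ, Matrix (Fin (m i)) (Fin (m (i+1))) ℝ,
        NonnegT N m P ∧ FeasibleT N m a b P ∧ v = primalVal N m C ε P} :=
    ⟨Pstar, hmem.1, hmem.2.1, rfl⟩
  have hlb : ∀ v ∈ {v : ℝ | ∃ P : ∀ i : ℕ, Matrix (Fin (m i)) (Fin (m (i+1))) ℝ,
      NonnegT N m P ∧ FeasibleT N m a b P ∧ v = primalVal N m C ε P},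
      primalVal N m C ε Pstar ≤ v := by
    rintro v ⟨P, hn, hf, rfl⟩
    exact hglobal P hn hf
  have hinf : sInf {v : ℝ | ∃ P : ∀ i : ℕ, Matrix (Fin (m i)) (Fin (m (i+1))) ℝ,
      NonnegT N m P ∧ FeasibleT N m a b P ∧ v = primalVal N m C ε P}
      = primalVal N m C ε Pstar :=
    le_antisymm (csInf_le ⟨primalVal N m C ε Pstar, hlb⟩ hmemPS)
      (le_csInf ⟨primalVal N m C ε Pstar, hmemPS⟩ hlb)
  rw [hinf]
  exact (le_antisymm hsup_le hsup_ge).symm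
end
end

section
/- Suppose the tuple (f̂^(i))_{i=1}^{M+1} of real vectors maximizes the dual function L over all tuples of real vectors, and set û^(i) := exp(f̂^(i)/ε) (entrywise exponential). Then the tuple of matrices (P̂^(i))_{i=1}^M defined by P̂^(i) := diag(û^(i)) K^(i) diag(1/û^(i+1)) for i = 1,…,M−1 and P̂^(M) := diag(û^(M)) K^(M) diag(û^(M+1)) is feasible and optimal for the regularized sequentially composed optimal transport problem, i.e., it minimizes Σ_{i=1}^M (⟨C^(i), P^(i)⟩ − ε·H(P^(i))) over all feasible tuples. -/
open Matrix Finset Real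

noncomputable section

lemma fy (x t : ℝ) (hx : 0 ≤ x) : x * t - Real.exp t ≤ x * (Real.log x - 1) := by
  rcases eq_or_lt_of_le hx with h | h
  · simp [← h]; positivity
  · have h1 : (t - Real.log x) + 1 ≤ Real.exp (t - Real.log x) := Real.add_one_le_exp _
    have h2 : Real.exp (t - Real.log x) = Real.exp t / x := by
      rw [Real.exp_sub, Real.exp_log h]
    rw [h2] at h1
    have h3 : x * ((t - Real.log x) + 1) ≤ Real.exp t := by
      calc x * ((t - Real.log x) + 1) ≤ x * (Real.exp t / x) :=
            mul_le_mul_of_nonneg_left h1 hx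
        _ = Real.exp t := by field_simp
    nlinarith

lemma fy_eq (t : ℝ) : Real.exp t * t - Real.exp t = Real.exp t * (Real.log (Real.exp t) - 1) := by
  rw [Real.log_exp]; ring

lemma per_le {p q : ℕ} (X P : Matrix (Fin p) (Fin q) ℝ) (hP : ∀ j k, 0 ≤ P j k)
    (L : Fin p → Fin q → ℝ) (ε : ℝ) (hε : 0 < ε) :
    (∑ j, ∑ k, P j k * L j k) - ε * (∑ j, ∑ k, Real.exp ((L j k - X j k)/ε))
      ≤ frob X P - ε * ent P := by
  have key : ∀ j k, P j k * L j k - ε * Real.exp ((L j k - X j k)/ε)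
      ≤ X j k * P j k + ε * (P j k * (Real.log (P j k) - 1)) := by
    intro j k
    have ht : ε * ((L j k - X j k)/ε) = L j k - X j k := by field_simp
    have h := mul_le_mul_of_nonneg_left (fy (P j k) ((L j k - X j k)/ε) (hP j k)) hε.le
    have hq : ε * (P j k * ((L j k - X j k)/ε)) = P j k * L j k - P j k * X j k := by
      field_simp
    have h' : ε * (P j k * ((L j k - X j k)/ε)) - ε * Real.exp ((L j k - X j k)/ε)
        ≤ ε * (P j k * (Real.log (P j k) - 1)) := by linarith [h, mul_sub ε (P j k * ((L j k - X j k)/ε)) (Real.exp ((L j k - X j k)/ε))]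
    linarith [h', hq]
  have hsum : ∑ j, ∑ k, (P j k * L j k - ε * Real.exp ((L j k - X j k)/ε))
      ≤ ∑ j, ∑ k, (X j k * P j k + ε * (P j k * (Real.log (P j k) - 1))) := by
    apply Finset.sum_le_sum; intro j _; apply Finset.sum_le_sum; intro k _; exact key j k
  calc (∑ j, ∑ k, P j k * L j k) - ε * (∑ j, ∑ k, Real.exp ((L j k - X j k)/ε))
      = ∑ j, ∑ k, (P j k * L j k - ε * Real.exp ((L j k - X j k)/ε)) := by
        simp [Finset.sum_sub_distrib, Finset.mul_sum]
    _ ≤ ∑ j, ∑ k, (X j k * P j k + ε * (P j k * (Real.log (P j k) - 1))) := hsum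
    _ = frob X P - ε * ent P := by
        simp [frob, ent, Finset.sum_add_distrib, Finset.mul_sum]

lemma per_eq {p q : ℕ} (X P : Matrix (Fin p) (Fin q) ℝ)
    (L : Fin p → Fin q → ℝ) (ε : ℝ) (hε : 0 < ε)
    (hPL : ∀ j k, P j k = Real.exp ((L j k - X j k)/ε)) :
    (∑ j, ∑ k, P j k * L j k) - ε * (∑ j, ∑ k, Real.exp ((L j k - X j k)/ε))
      = frob X P - ε * ent P := by
  have key : ∀ j k, P j k * L j k - ε * Real.exp ((L j k - X j k)/ε)
      = X j k * P j k + ε * (P j k * (Real.log (P j k) - 1)) := by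
    intro j k
    have ht : ε * ((L j k - X j k)/ε) = L j k - X j k := by field_simp
    have h := fy_eq ((L j k - X j k)/ε)
    rw [← hPL j k] at h
    have h2 := congrArg (fun z => ε * z) h
    have hq : ε * (P j k * ((L j k - X j k)/ε)) = P j k * L j k - P j k * X j k := by
      field_simp
    have hep : ε * P j k = ε * Real.exp ((L j k - X j k)/ε) := by rw [hPL j k]
    have h3 : ε * (P j k * ((L j k - X j k)/ε)) - ε * P j k = ε * (P j k * (Real.log (P j k) - 1)) := by
      rw [← mul_sub]; exact h2
    linarith [h3, hq, hep]
  calc (∑ j, ∑ k, P j k * L j k) - ε * (∑ j, ∑ k, Real.exp ((L j k - X j k)/ε))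
      = ∑ j, ∑ k, (P j k * L j k - ε * Real.exp ((L j k - X j k)/ε)) := by
        simp [Finset.sum_sub_distrib, Finset.mul_sum]
    _ = ∑ j, ∑ k, (X j k * P j k + ε * (P j k * (Real.log (P j k) - 1))) := by
        refine Finset.sum_congr rfl fun j _ => Finset.sum_congr rfl fun k _ => key j k
    _ = frob X P - ε * ent P := by
        simp [frob, ent, Finset.sum_add_distrib, Finset.mul_sum]

lemma telescope (N : ℕ) (m : ℕ → ℕ)
    (a : Fin (m 1) → ℝ) (b : Fin (m (N+3)) → ℝ)
    (Q : ∀ i : ℕ, Matrix (Fin (m i)) (Fin (m (i+1))) ℝ)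
    (hQ : FeasibleT N m a b Q)
    (f : ∀ i : ℕ, Fin (m i) → ℝ) :
    (∑ i ∈ Finset.Icc 1 (N+1), ∑ j, ∑ k, Q i j k * (f i j - f (i+1) k))
      + (∑ j, ∑ k, Q (N+2) j k * (f (N+2) j + f (N+3) k))
    = (∑ j, f 1 j * a j) + (∑ k, f (N+3) k * b k) := by
  obtain ⟨h1, h2, h3⟩ := hQ
  set h : ℕ → ℝ := fun i => ∑ j, f i j * (∑ k, Q i j k) with hh
  have hcol : ∀ i, 1 ≤ i → i ≤ N + 1 → ∀ k, (∑ j, Q i j k) = ∑ k', Q (i+1) k k' := by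
    intro i hi1 hi2 k
    have := congrFun (h3 i hi1 hi2) k
    simpa [Matrix.mulVec, Matrix.transpose_apply, dotProduct] using this
  have step : ∀ i ∈ Finset.Icc 1 (N+1),
      (∑ j, ∑ k, Q i j k * (f i j - f (i+1) k)) = h i - h (i+1) := by
    intro i hi
    rw [Finset.mem_Icc] at hi
    have e1 : (∑ j, ∑ k, Q i j k * (f i j - f (i+1) k))
        = (∑ j, f i j * (∑ k, Q i j k)) - ∑ k, f (i+1) k * (∑ j, Q i j k) := by
      have hrow : ∀ j, ∑ k, Q i j k * (f i j - f (i+1) k)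
          = f i j * (∑ k, Q i j k) - ∑ k, f (i+1) k * Q i j k := by
        intro j
        rw [Finset.mul_sum, ← Finset.sum_sub_distrib]
        exact Finset.sum_congr rfl fun k _ => by ring
      rw [Finset.sum_congr rfl (fun j _ => hrow j), Finset.sum_sub_distrib]
      congr 1
      rw [Finset.sum_comm]
      exact Finset.sum_congr rfl fun k _ => by rw [Finset.mul_sum]
    rw [e1]
    congr 1
    refine Finset.sum_congr rfl fun k _ => ?_
    rw [hcol i hi.1 hi.2 k]
  rw [Finset.sum_congr rfl step]
  have tele : ∑ i ∈ Finset.Icc 1 (N+1), (h i - h (i+1)) = h 1 - h (N+2) := by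
    have : Finset.Icc 1 (N+1) = Finset.Ico 1 (N+2) := by
      ext x; simp [Finset.mem_Icc, Finset.mem_Ico]; omega
    rw [this, Finset.sum_Ico_eq_sum_range]
    have hr : N + 2 - 1 = N + 1 := by omega
    rw [hr]
    have e2 : ∀ x ∈ Finset.range (N+1), h (1 + x) - h (1 + x + 1)
        = (fun i => h (i + 1)) x - (fun i => h (i + 1)) (x + 1) := by
      intro x _
      simp only []
      congr 2 <;> omega
    rw [Finset.sum_congr rfl e2, Finset.sum_range_sub' (fun i => h (i + 1)) (N+1)]
  rw [tele]
  have last : (∑ j, ∑ k, Q (N+2) j k * (f (N+2) j + f (N+3) k))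
      = h (N+2) + ∑ k, f (N+3) k * b k := by
    have e1 : (∑ j, ∑ k, Q (N+2) j k * (f (N+2) j + f (N+3) k))
        = (∑ j, f (N+2) j * (∑ k, Q (N+2) j k)) + ∑ k, f (N+3) k * (∑ j, Q (N+2) j k) := by
      have hrow : ∀ j, ∑ k, Q (N+2) j k * (f (N+2) j + f (N+3) k)
          = f (N+2) j * (∑ k, Q (N+2) j k) + ∑ k, f (N+3) k * Q (N+2) j k := by
        intro j
        rw [Finset.mul_sum, ← Finset.sum_add_distrib]
        exact Finset.sum_congr rfl fun k _ => by ring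
      rw [Finset.sum_congr rfl (fun j _ => hrow j), Finset.sum_add_distrib]
      congr 1
      rw [Finset.sum_comm]
      exact Finset.sum_congr rfl fun k _ => by rw [Finset.mul_sum]
    rw [e1]
    congr 1
    refine Finset.sum_congr rfl fun k _ => ?_
    have := congrFun h2 k
    simp only [Matrix.mulVec, Matrix.transpose_apply, dotProduct, mul_one] at this
    rw [this]
  rw [last]
  have first : h 1 = ∑ j, f 1 j * a j := by
    refine Finset.sum_congr rfl fun j _ => ?_
    have := congrFun h1 j
    simp only [Matrix.mulVec, dotProduct, mul_one] at this
    rw [this]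
  rw [first]
  ring

lemma decomp (N : ℕ) (m : ℕ → ℕ)
    (C : ∀ i : ℕ, Matrix (Fin (m i)) (Fin (m (i+1))) ℝ)
    (a : Fin (m 1) → ℝ) (b : Fin (m (N+3)) → ℝ) (ε : ℝ)
    (f : ∀ i : ℕ, Fin (m i) → ℝ)
    (Q : ∀ i : ℕ, Matrix (Fin (m i)) (Fin (m (i+1))) ℝ)
    (hQf : FeasibleT N m a b Q) :
    primalVal N m C ε Q - dualGen N m C a b ε f
    = (∑ i ∈ Finset.Icc 1 (N+1),
        ((frob (C i) (Q i) - ε * ent (Q i))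
          - ((∑ j, ∑ k, Q i j k * (f i j - f (i+1) k))
              - ε * ∑ j, ∑ k, Real.exp ((f i j - f (i+1) k - C i j k) / ε))))
      + ((frob (C (N+2)) (Q (N+2)) - ε * ent (Q (N+2)))
          - ((∑ j, ∑ k, Q (N+2) j k * (f (N+2) j + f (N+3) k))
              - ε * ∑ j, ∑ k, Real.exp ((f (N+2) j + f (N+3) k - C (N+2) j k) / ε))) := by
  have hset : Finset.Icc 1 (N+2) = insert (N+2) (Finset.Icc 1 (N+1)) := by
    ext x; simp [Finset.mem_Icc, Finset.mem_insert]; omega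
  have hnotmem : (N+2) ∉ Finset.Icc 1 (N+1) := by simp
  have tel := telescope N m a b Q hQf f
  rw [primalVal, dualGen, hset, Finset.sum_insert hnotmem]
  rw [← tel]
  simp only [Finset.sum_sub_distrib, ← Finset.mul_sum]
  ring

lemma primal_ge (N : ℕ) (m : ℕ → ℕ)
    (C : ∀ i : ℕ, Matrix (Fin (m i)) (Fin (m (i+1))) ℝ)
    (a : Fin (m 1) → ℝ) (b : Fin (m (N+3)) → ℝ) (ε : ℝ) (hε : 0 < ε)
    (f : ∀ i : ℕ, Fin (m i) → ℝ)
    (Q : ∀ i : ℕ, Matrix (Fin (m i)) (Fin (m (i+1))) ℝ)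
    (hQn : NonnegT N m Q) (hQf : FeasibleT N m a b Q) :
    dualGen N m C a b ε f ≤ primalVal N m C ε Q := by
  have hd := decomp N m C a b ε f Q hQf
  have hterm : ∀ i ∈ Finset.Icc 1 (N+1),
      (0:ℝ) ≤ (frob (C i) (Q i) - ε * ent (Q i))
        - ((∑ j, ∑ k, Q i j k * (f i j - f (i+1) k))
            - ε * ∑ j, ∑ k, Real.exp ((f i j - f (i+1) k - C i j k) / ε)) := by
    intro i hi
    rw [Finset.mem_Icc] at hi
    have := per_le (C i) (Q i) (hQn i hi.1 (by omega)) (fun j k => f i j - f (i+1) k) ε hε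
    linarith [this]
  have hlast : (0:ℝ) ≤ (frob (C (N+2)) (Q (N+2)) - ε * ent (Q (N+2)))
      - ((∑ j, ∑ k, Q (N+2) j k * (f (N+2) j + f (N+3) k))
          - ε * ∑ j, ∑ k, Real.exp ((f (N+2) j + f (N+3) k - C (N+2) j k) / ε)) := by
    have := per_le (C (N+2)) (Q (N+2)) (hQn (N+2) (by omega) (by omega))
      (fun j k => f (N+2) j + f (N+3) k) ε hε
    linarith [this]
  have hsum : (0:ℝ) ≤ ∑ i ∈ Finset.Icc 1 (N+1),
      ((frob (C i) (Q i) - ε * ent (Q i))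
        - ((∑ j, ∑ k, Q i j k * (f i j - f (i+1) k))
            - ε * ∑ j, ∑ k, Real.exp ((f i j - f (i+1) k - C i j k) / ε))) :=
    Finset.sum_nonneg hterm
  linarith [hd, hsum, hlast]

lemma primal_eq (N : ℕ) (m : ℕ → ℕ)
    (C : ∀ i : ℕ, Matrix (Fin (m i)) (Fin (m (i+1))) ℝ)
    (a : Fin (m 1) → ℝ) (b : Fin (m (N+3)) → ℝ) (ε : ℝ) (hε : 0 < ε)
    (f : ∀ i : ℕ, Fin (m i) → ℝ)
    (P : ∀ i : ℕ, Matrix (Fin (m i)) (Fin (m (i+1))) ℝ)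
    (hPf : FeasibleT N m a b P)
    (h1 : ∀ i, 1 ≤ i → i ≤ N+1 → ∀ j k, P i j k = Real.exp ((f i j - f (i+1) k - C i j k) / ε))
    (h2 : ∀ j k, P (N+2) j k = Real.exp ((f (N+2) j + f (N+3) k - C (N+2) j k) / ε)) :
    primalVal N m C ε P = dualGen N m C a b ε f := by
  have hd := decomp N m C a b ε f P hPf
  have hterm : ∀ i ∈ Finset.Icc 1 (N+1),
      ((frob (C i) (P i) - ε * ent (P i))
        - ((∑ j, ∑ k, P i j k * (f i j - f (i+1) k))
            - ε * ∑ j, ∑ k, Real.exp ((f i j - f (i+1) k - C i j k) / ε))) = 0 := by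
    intro i hi
    rw [Finset.mem_Icc] at hi
    have := per_eq (C i) (P i) (fun j k => f i j - f (i+1) k) ε hε (h1 i hi.1 hi.2)
    linarith [this]
  have hlast : ((frob (C (N+2)) (P (N+2)) - ε * ent (P (N+2)))
      - ((∑ j, ∑ k, P (N+2) j k * (f (N+2) j + f (N+3) k))
          - ε * ∑ j, ∑ k, Real.exp ((f (N+2) j + f (N+3) k - C (N+2) j k) / ε))) = 0 := by
    have := per_eq (C (N+2)) (P (N+2)) (fun j k => f (N+2) j + f (N+3) k) ε hε h2
    linarith [this]
  rw [Finset.sum_congr rfl hterm] at hd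
  simp only [Finset.sum_const_zero] at hd
  linarith [hd, hlast]

lemma hasDerivAt_exp_affine (c d e : ℝ) :
    HasDerivAt (fun t => Real.exp ((c + t * d) / e)) (Real.exp (c / e) * (d / e)) 0 := by
  have h : HasDerivAt (fun t : ℝ => (c + t * d) / e) (d / e) 0 := by
    simpa using (((hasDerivAt_id (0:ℝ)).mul_const d).const_add c).div_const e
  simpa using h.exp

lemma stationarity (N : ℕ) (m : ℕ → ℕ)
    (C : ∀ i : ℕ, Matrix (Fin (m i)) (Fin (m (i+1))) ℝ)
    (a : Fin (m 1) → ℝ) (b : Fin (m (N+3)) → ℝ) (ε : ℝ) (hε : 0 < ε)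
    (fhat : ∀ i : ℕ, Fin (m i) → ℝ)
    (hopt : ∀ g : ∀ i : ℕ, Fin (m i) → ℝ,
      dualGen N m C a b ε g ≤ dualGen N m C a b ε fhat)
    (v : ∀ i : ℕ, Fin (m i) → ℝ) :
    (∑ j, v 1 j * a j) + (∑ k, v (N+3) k * b k)
    = (∑ j, ∑ k, Real.exp ((fhat (N+2) j + fhat (N+3) k - C (N+2) j k) / ε)
          * (v (N+2) j + v (N+3) k))
      + ∑ i ∈ Finset.Icc 1 (N+1), ∑ j, ∑ k,
          Real.exp ((fhat i j - fhat (i+1) k - C i j k) / ε) * (v i j - v (i+1) k) := by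
  have hne : ε ≠ 0 := ne_of_gt hε
  set φ : ℝ → ℝ := fun t => dualGen N m C a b ε (fun i j => fhat i j + t * v i j) with hφ
  have hφ0 : φ 0 = dualGen N m C a b ε fhat := by
    have h0 : (fun (i : ℕ) (j : Fin (m i)) => fhat i j + (0:ℝ) * v i j) = fhat := by
      funext i j; ring
    rw [hφ]; simp only [h0]
  have hmax : IsLocalMax φ 0 := by
    apply Filter.Eventually.of_forall
    intro t
    rw [hφ0]
    exact hopt _
  -- the explicit form of φ
  have hform : φ = fun t : ℝ =>
      (∑ j, (fhat 1 j + t * v 1 j) * a j) + (∑ k, (fhat (N+3) k + t * v (N+3) k) * b k)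
        - ε * ((∑ j, ∑ k, Real.exp ((fhat (N+2) j + t * v (N+2) j
              + (fhat (N+3) k + t * v (N+3) k) - C (N+2) j k) / ε))
          + ∑ i ∈ Finset.Icc 1 (N+1), ∑ j, ∑ k,
              Real.exp ((fhat i j + t * v i j - (fhat (i+1) k + t * v (i+1) k) - C i j k) / ε)) := by
    funext t
    rw [hφ]
    simp only [dualGen]
  have hA : HasDerivAt (fun t : ℝ => ∑ j, (fhat 1 j + t * v 1 j) * a j)
      (∑ j, v 1 j * a j) 0 := by
    apply HasDerivAt.fun_sum
    intro j _
    simpa using (((hasDerivAt_id (0:ℝ)).mul_const (v 1 j)).const_add (fhat 1 j)).mul_const (a j)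
  have hB : HasDerivAt (fun t : ℝ => ∑ k, (fhat (N+3) k + t * v (N+3) k) * b k)
      (∑ k, v (N+3) k * b k) 0 := by
    apply HasDerivAt.fun_sum
    intro k _
    simpa using (((hasDerivAt_id (0:ℝ)).mul_const (v (N+3) k)).const_add (fhat (N+3) k)).mul_const (b k)
  have hexpm : ∀ (i : ℕ) (j : Fin (m i)) (k : Fin (m (i+1))),
      HasDerivAt (fun t : ℝ =>
          Real.exp ((fhat i j + t * v i j - (fhat (i+1) k + t * v (i+1) k) - C i j k) / ε))
        (Real.exp ((fhat i j - fhat (i+1) k - C i j k) / ε) * ((v i j - v (i+1) k) / ε)) 0 := by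
    intro i j k
    have hfun : (fun t : ℝ =>
        Real.exp ((fhat i j + t * v i j - (fhat (i+1) k + t * v (i+1) k) - C i j k) / ε))
        = fun t : ℝ =>
          Real.exp (((fhat i j - fhat (i+1) k - C i j k) + t * (v i j - v (i+1) k)) / ε) := by
      funext t; congr 1; ring
    rw [hfun]
    exact hasDerivAt_exp_affine _ _ _
  have hexpp : ∀ (j : Fin (m (N+2))) (k : Fin (m (N+3))),
      HasDerivAt (fun t : ℝ =>
          Real.exp ((fhat (N+2) j + t * v (N+2) j + (fhat (N+3) k + t * v (N+3) k)
            - C (N+2) j k) / ε))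
        (Real.exp ((fhat (N+2) j + fhat (N+3) k - C (N+2) j k) / ε)
          * ((v (N+2) j + v (N+3) k) / ε)) 0 := by
    intro j k
    have hfun : (fun t : ℝ =>
        Real.exp ((fhat (N+2) j + t * v (N+2) j + (fhat (N+3) k + t * v (N+3) k)
            - C (N+2) j k) / ε))
        = fun t : ℝ =>
          Real.exp (((fhat (N+2) j + fhat (N+3) k - C (N+2) j k)
            + t * (v (N+2) j + v (N+3) k)) / ε) := by
      funext t; congr 1; ring
    rw [hfun]
    exact hasDerivAt_exp_affine _ _ _
  have hS1 : HasDerivAt (fun t : ℝ => ∑ j, ∑ k,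
        Real.exp ((fhat (N+2) j + t * v (N+2) j + (fhat (N+3) k + t * v (N+3) k)
          - C (N+2) j k) / ε))
      (∑ j, ∑ k, Real.exp ((fhat (N+2) j + fhat (N+3) k - C (N+2) j k) / ε)
        * ((v (N+2) j + v (N+3) k) / ε)) 0 :=
    HasDerivAt.fun_sum fun j _ => HasDerivAt.fun_sum fun k _ => hexpp j k
  have hS2 : HasDerivAt (fun t : ℝ => ∑ i ∈ Finset.Icc 1 (N+1), ∑ j, ∑ k,
        Real.exp ((fhat i j + t * v i j - (fhat (i+1) k + t * v (i+1) k) - C i j k) / ε))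
      (∑ i ∈ Finset.Icc 1 (N+1), ∑ j, ∑ k,
        Real.exp ((fhat i j - fhat (i+1) k - C i j k) / ε) * ((v i j - v (i+1) k) / ε)) 0 :=
    HasDerivAt.fun_sum fun i _ => HasDerivAt.fun_sum fun j _ => HasDerivAt.fun_sum fun k _ => hexpm i j k
  have hfull : HasDerivAt φ
      ((∑ j, v 1 j * a j) + (∑ k, v (N+3) k * b k)
        - ε * ((∑ j, ∑ k, Real.exp ((fhat (N+2) j + fhat (N+3) k - C (N+2) j k) / ε)
              * ((v (N+2) j + v (N+3) k) / ε))
          + ∑ i ∈ Finset.Icc 1 (N+1), ∑ j, ∑ k,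
              Real.exp ((fhat i j - fhat (i+1) k - C i j k) / ε)
                * ((v i j - v (i+1) k) / ε))) 0 := by
    rw [hform]
    exact (hA.add hB).sub ((hS1.add hS2).const_mul ε)
  have hzero := hmax.hasDerivAt_eq_zero hfull
  have conv1 : ε * (∑ j, ∑ k, Real.exp ((fhat (N+2) j + fhat (N+3) k - C (N+2) j k) / ε)
        * ((v (N+2) j + v (N+3) k) / ε))
      = ∑ j, ∑ k, Real.exp ((fhat (N+2) j + fhat (N+3) k - C (N+2) j k) / ε)
        * (v (N+2) j + v (N+3) k) := by
    rw [Finset.mul_sum]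
    refine Finset.sum_congr rfl fun j _ => ?_
    rw [Finset.mul_sum]
    refine Finset.sum_congr rfl fun k _ => ?_
    field_simp
  have conv2 : ε * (∑ i ∈ Finset.Icc 1 (N+1), ∑ j, ∑ k,
        Real.exp ((fhat i j - fhat (i+1) k - C i j k) / ε) * ((v i j - v (i+1) k) / ε))
      = ∑ i ∈ Finset.Icc 1 (N+1), ∑ j, ∑ k,
        Real.exp ((fhat i j - fhat (i+1) k - C i j k) / ε) * (v i j - v (i+1) k) := by
    rw [Finset.mul_sum]
    refine Finset.sum_congr rfl fun i _ => ?_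
    rw [Finset.mul_sum]
    refine Finset.sum_congr rfl fun j _ => ?_
    rw [Finset.mul_sum]
    refine Finset.sum_congr rfl fun k _ => ?_
    field_simp
  have hmul := mul_add ε
    (∑ j, ∑ k, Real.exp ((fhat (N+2) j + fhat (N+3) k - C (N+2) j k) / ε)
      * ((v (N+2) j + v (N+3) k) / ε))
    (∑ i ∈ Finset.Icc 1 (N+1), ∑ j, ∑ k,
      Real.exp ((fhat i j - fhat (i+1) k - C i j k) / ε) * ((v i j - v (i+1) k) / ε))
  linarith [hzero, conv1, conv2, hmul]
/-- **Optimal plans from dual-optimal vectors** (Cor. 3.4): if `f̂` maximizes the dual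
function and `û⁽ⁱ⁾ = exp(f̂⁽ⁱ⁾/ε)` entrywise, then the tuple
`P̂⁽ⁱ⁾ = diag(û⁽ⁱ⁾) K⁽ⁱ⁾ diag(1/û⁽ⁱ⁺¹⁾)` (for `i ≤ M − 1`),
`P̂⁽ᴹ⁾ = diag(û⁽ᴹ⁾) K⁽ᴹ⁾ diag(û⁽ᴹ⁺¹⁾)` is feasible and optimal for the regularized
sequentially composed OT problem. -/
theorem dual_optimal_gives_optimal_plans_seqOT
    (N : ℕ) (m : ℕ → ℕ) (hm : ∀ i, 0 < m i)
    (C : ∀ i : ℕ, Matrix (Fin (m i)) (Fin (m (i+1))) ℝ)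
    (hC : ∀ i, ∀ j k, 0 ≤ C i j k)
    (a : Fin (m 1) → ℝ) (b : Fin (m (N+3)) → ℝ)
    (ha : ∀ j, 0 ≤ a j) (hb : ∀ k, 0 ≤ b k)
    (hasum : ∑ j, a j = 1) (hbsum : ∑ k, b k = 1)
    (ε : ℝ) (hε : 0 < ε)
    (K : ∀ i : ℕ, Matrix (Fin (m i)) (Fin (m (i+1))) ℝ)
    (hK : ∀ i j k, K i j k = Real.exp (-C i j k / ε))
    (fhat : ∀ i : ℕ, Fin (m i) → ℝ)
    (hopt : ∀ g : ∀ i : ℕ, Fin (m i) → ℝ,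
      dualGen N m C a b ε g ≤ dualGen N m C a b ε fhat)
    (uhat : ∀ i : ℕ, Fin (m i) → ℝ)
    (huhat : ∀ i j, uhat i j = Real.exp (fhat i j / ε))
    (Phat : ∀ i : ℕ, Matrix (Fin (m i)) (Fin (m (i+1))) ℝ)
    (hPhat1 : ∀ i : ℕ, 1 ≤ i → i ≤ N + 1 →
      Phat i = Matrix.diagonal (uhat i) * K i * Matrix.diagonal (fun k => (uhat (i+1) k)⁻¹))
    (hPhat2 : Phat (N+2) =
      Matrix.diagonal (uhat (N+2)) * K (N+2) * Matrix.diagonal (uhat (N+3))) :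
    FeasibleT N m a b Phat ∧
      ∀ Q : ∀ i : ℕ, Matrix (Fin (m i)) (Fin (m (i+1))) ℝ,
        NonnegT N m Q → FeasibleT N m a b Q →
        primalVal N m C ε Phat ≤ primalVal N m C ε Q := by
  have hne : ε ≠ 0 := ne_of_gt hε
  have hPE : ∀ i, 1 ≤ i → i ≤ N+1 → ∀ j k,
      Phat i j k = Real.exp ((fhat i j - fhat (i+1) k - C i j k) / ε) := by
    intro i h1 h2 j k
    rw [hPhat1 i h1 h2, Matrix.mul_diagonal, Matrix.diagonal_mul, huhat, huhat, hK,
      ← Real.exp_neg, ← Real.exp_add, ← Real.exp_add]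
    congr 1
    field_simp
    ring
  have hPL : ∀ j k, Phat (N+2) j k
      = Real.exp ((fhat (N+2) j + fhat (N+3) k - C (N+2) j k) / ε) := by
    intro j k
    rw [hPhat2, Matrix.mul_diagonal, Matrix.diagonal_mul, huhat, huhat, hK,
      ← Real.exp_add, ← Real.exp_add]
    congr 1
    field_simp
    ring
  have hfeas : FeasibleT N m a b Phat := by
    refine ⟨?_, ?_, ?_⟩
    · -- first marginal
      funext j₀
      simp only [Matrix.mulVec, dotProduct, mul_one]
      have hst := stationarity N m C a b ε hε fhat hopt
        (fun q j => if q = 1 ∧ (j : ℕ) = (j₀ : ℕ) then (1:ℝ) else 0)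
      have hn3 : ¬((N+3 : ℕ) = 1) := by omega
      have hn2 : ¬((N+2 : ℕ) = 1) := by omega
      have h11 : ¬((1:ℕ) + 1 = 1) := by omega
      have hIcc : (1:ℕ) ∈ Finset.Icc 1 (N+1) := by simp
      rw [← Finset.add_sum_erase _ _ hIcc] at hst
      have hrest : ∑ i ∈ (Finset.Icc 1 (N+1)).erase 1, ∑ j, ∑ k,
          Real.exp ((fhat i j - fhat (i+1) k - C i j k) / ε)
            * ((if i = 1 ∧ (j : ℕ) = (j₀ : ℕ) then (1:ℝ) else 0)
              - (if i+1 = 1 ∧ (k : ℕ) = (j₀ : ℕ) then (1:ℝ) else 0)) = 0 := by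
        refine Finset.sum_eq_zero fun i hi => ?_
        have h1 : ¬(i = 1) := (Finset.mem_erase.mp hi).1
        have hmem := Finset.mem_of_mem_erase hi
        rw [Finset.mem_Icc] at hmem
        have h2 : ¬(i + 1 = 1) := by omega
        simp [h1, h2, show ¬ i = 0 by omega]
      rw [hrest] at hst
      simp only [hn3, hn2, h11, false_and, if_false, zero_mul, mul_zero,
        Finset.sum_const_zero, add_zero, zero_add, sub_zero, true_and,
        Fin.val_eq_val, ite_mul, one_mul, mul_ite, mul_one] at hst
      rw [Finset.sum_eq_single_of_mem j₀ (Finset.mem_univ _) (fun c _ hc => by simp [hc]),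
        Finset.sum_eq_single_of_mem j₀ (Finset.mem_univ _) (fun c _ hc => by simp [hc])] at hst
      simp only [if_true, eq_self_iff_true] at hst
      rw [hst]
      exact Finset.sum_congr rfl fun k _ => hPE 1 le_rfl (by omega) j₀ k
    · -- last marginal
      funext k₀
      simp only [Matrix.mulVec, Matrix.transpose_apply, dotProduct, mul_one]
      have hst := stationarity N m C a b ε hε fhat hopt
        (fun q j => if q = N+3 ∧ (j : ℕ) = (k₀ : ℕ) then (1:ℝ) else 0)
      have hn1 : ¬((1:ℕ) = N+3) := by omega
      have hn2 : ¬((N+2:ℕ) = N+3) := by omega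
      have hrest : ∑ i ∈ Finset.Icc 1 (N+1), ∑ j, ∑ k,
          Real.exp ((fhat i j - fhat (i+1) k - C i j k) / ε)
            * ((if i = N+3 ∧ (j : ℕ) = (k₀ : ℕ) then (1:ℝ) else 0)
              - (if i+1 = N+3 ∧ (k : ℕ) = (k₀ : ℕ) then (1:ℝ) else 0)) = 0 := by
        refine Finset.sum_eq_zero fun i hi => ?_
        rw [Finset.mem_Icc] at hi
        have h1 : ¬(i = N+3) := by omega
        have h2 : ¬(i + 1 = N+3) := by omega
        simp [h1, h2, show ¬ i = N + 2 by omega]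
      rw [hrest] at hst
      simp only [hn1, hn2, false_and, if_false, zero_mul, mul_zero, zero_add, add_zero,
        Finset.sum_const_zero, true_and, Fin.val_eq_val, ite_mul, one_mul, mul_ite, mul_one,
        Finset.sum_ite_eq', Finset.mem_univ, if_true] at hst
      rw [hst]
      exact Finset.sum_congr rfl fun j _ => hPL j k₀
    · -- consistency
      intro i hi1 hi2
      funext k₀
      simp only [Matrix.mulVec, Matrix.transpose_apply, dotProduct, mul_one]
      have pull : ∀ (p q : ℕ) (G : Fin (m p) → Fin (m q) → ℝ) (x₀ : Fin (m p)),
          (∑ j, ∑ k, if j = x₀ then G j k else 0) = ∑ k, G x₀ k := by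
        intro p q G x₀
        rw [Finset.sum_eq_single_of_mem x₀ (Finset.mem_univ _) (fun c _ hc => by simp [hc])]
        simp
      rcases Nat.lt_or_ge i (N+1) with hcase | hcase
      · -- i ≤ N
        have hst := stationarity N m C a b ε hε fhat hopt
          (fun q j => if q = i+1 ∧ (j : ℕ) = (k₀ : ℕ) then (1:ℝ) else 0)
        have hn1 : ¬((1:ℕ) = i+1) := by omega
        have hn3 : ¬((N+3:ℕ) = i+1) := by omega
        have hn2 : ¬((N+2:ℕ) = i+1) := by omega
        have hii : ¬(i = i + 1) := by omega
        have hii2 : ¬(i + 1 + 1 = i + 1) := by omega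
        have hmemi : i ∈ Finset.Icc 1 (N+1) := by
          rw [Finset.mem_Icc]; omega
        have hmemi1 : i+1 ∈ (Finset.Icc 1 (N+1)).erase i := by
          rw [Finset.mem_erase, Finset.mem_Icc]; omega
        rw [← Finset.add_sum_erase _ _ hmemi, ← Finset.add_sum_erase _ _ hmemi1] at hst
        have hrest : ∑ q ∈ ((Finset.Icc 1 (N+1)).erase i).erase (i+1), ∑ j, ∑ k,
            Real.exp ((fhat q j - fhat (q+1) k - C q j k) / ε)
              * ((if q = i+1 ∧ (j : ℕ) = (k₀ : ℕ) then (1:ℝ) else 0)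
                - (if q+1 = i+1 ∧ (k : ℕ) = (k₀ : ℕ) then (1:ℝ) else 0)) = 0 := by
          refine Finset.sum_eq_zero fun q hq => ?_
          have h1 : ¬(q = i+1) := (Finset.mem_erase.mp hq).1
          have h2 : ¬(q + 1 = i+1) := by
            have hne' := (Finset.mem_erase.mp (Finset.mem_erase.mp hq).2).1
            omega
          simp [h1, h2, show ¬ q = i by omega]
        rw [hrest] at hst
        simp only [hn1, hn3, hn2, hii, hii2, false_and, if_false, zero_mul, mul_zero,
          zero_add, add_zero, Finset.sum_const_zero, true_and, zero_sub, sub_zero,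
          Fin.val_eq_val, ite_mul, one_mul, mul_ite, mul_one, mul_neg, neg_neg,
          Finset.sum_neg_distrib, Finset.sum_ite_eq', Finset.mem_univ, if_true] at hst
        rw [pull _ _ (fun j k => Real.exp ((fhat (i+1) j - fhat (i+1+1) k - C (i+1) j k) / ε)) k₀] at hst
        rw [Finset.sum_congr rfl (fun x (_ : x ∈ Finset.univ) => hPE i hi1 hi2 x k₀),
          Finset.sum_congr rfl (fun x (_ : x ∈ Finset.univ) => hPE (i+1) (by omega) (by omega) k₀ x)]
        linarith [hst]
      · -- i = N+1
        have hieq : i = N+1 := by omega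
        subst hieq
        have hst := stationarity N m C a b ε hε fhat hopt
          (fun q j => if q = N+2 ∧ (j : ℕ) = (k₀ : ℕ) then (1:ℝ) else 0)
        have hn1 : ¬((1:ℕ) = N+2) := by omega
        have hn3 : ¬((N+3:ℕ) = N+2) := by omega
        have hii2 : ¬(N+1+1 = N+2) → False := fun h => h rfl
        have hmemi : N+1 ∈ Finset.Icc 1 (N+1) := by
          rw [Finset.mem_Icc]; omega
        rw [← Finset.add_sum_erase _ _ hmemi] at hst
        have hrest : ∑ q ∈ (Finset.Icc 1 (N+1)).erase (N+1), ∑ j, ∑ k,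
            Real.exp ((fhat q j - fhat (q+1) k - C q j k) / ε)
              * ((if q = N+2 ∧ (j : ℕ) = (k₀ : ℕ) then (1:ℝ) else 0)
                - (if q+1 = N+2 ∧ (k : ℕ) = (k₀ : ℕ) then (1:ℝ) else 0)) = 0 := by
          refine Finset.sum_eq_zero fun q hq => ?_
          have hqm := Finset.mem_of_mem_erase hq
          rw [Finset.mem_Icc] at hqm
          have h1 : ¬(q = N+2) := by omega
          have h2 : ¬(q + 1 = N+2) := by
            have := (Finset.mem_erase.mp hq).1
            omega
          simp [h1, h2, show ¬ q = N + 1 by omega]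
        rw [hrest] at hst
        have hq1 : ¬((N+1:ℕ) = N+2) := by omega
        have hq2 : (N+1+1 : ℕ) = N+2 := by omega
        simp only [hn1, hn3, hq1, hq2, false_and, if_false, zero_mul, mul_zero,
          zero_add, add_zero, Finset.sum_const_zero, true_and, zero_sub, sub_zero,
          Fin.val_eq_val, ite_mul, one_mul, mul_ite, mul_one, mul_neg, neg_neg,
          Finset.sum_neg_distrib, Finset.sum_ite_eq', Finset.mem_univ, if_true] at hst
        rw [pull _ _ (fun j k => Real.exp ((fhat (N+2) j + fhat (N+3) k - C (N+2) j k) / ε)) k₀] at hst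
        rw [Finset.sum_congr rfl (fun x (_ : x ∈ Finset.univ) => hPE (N+1) (by omega) (by omega) x k₀),
          Finset.sum_congr rfl (fun x (_ : x ∈ Finset.univ) => hPL k₀ x)]
        linarith [hst]
  refine ⟨hfeas, ?_⟩
  intro Q hQn hQf
  have hge := primal_ge N m C a b ε hε fhat Q hQn hQf
  have heq := primal_eq N m C a b ε hε fhat Phat hfeas hPE hPL
  rw [heq]
  exact hge
end
end
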